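/- arXiv:1708.07298 — 4 statements merged into one kernel-verified Lean document; each statement's English description precedes it below -/
import Mathlib

section
/- The reduction formula in the third parameter holds: for γ ≠ 0 and α ≠ 0, E_{α,β}^{γ+1}(z) = [E_{α,β−1}^γ(z) + (1 − β + αγ) E_{α,β}^γ(z)] / (αγ) for all z ∈ ℂ. -/
open scoped Real
open Complex Filter
section PrabhakarAux
open Finset

lemma sumsq (x : ℝ) (hx : 1 ≤ x) (n : ℕ) :
    ∑ j ∈ range (n+1), (x + j)⁻¹^2 ≤ 1/x^2 + 1/x := by
  have key : ∀ n : ℕ, ∑ j ∈ range (n+1), (x + j)⁻¹^2 ≤ 1/x^2 + 1/x - 1/(x+n) := by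
    intro n
    induction n with
    | zero =>
      norm_num [Finset.sum_range_one]
      
      
    | succ m ih =>
      rw [Finset.sum_range_succ]
      have h1 : (0:ℝ) < x + m := by positivity
      have h2 : (0:ℝ) < x + (m:ℝ) + 1 := by positivity
      have h3 : (x + ((m:ℕ):ℝ) + 1)⁻¹^2 ≤ 1/(x+(m:ℝ)) - 1/(x+(m:ℝ)+1) := by
        have e1 : 1/(x+(m:ℝ)) - 1/(x+(m:ℝ)+1) = 1/((x+(m:ℝ))*(x+(m:ℝ)+1)) := by
          field_simp
          ring

        rw [e1, inv_pow, inv_eq_one_div]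
        exact one_div_le_one_div_of_le (by positivity) (by nlinarith)
      have e2 : x + ((m:ℝ)+1) = x + (m:ℝ) + 1 := by ring
      push_cast [e2]
      push_cast at ih h3
      linarith
  have h4 : (0:ℝ) < x + n := by positivity
  have h5 : 0 < 1/(x+(n:ℝ)) := by positivity
  linarith [key n]

lemma gammaLB (s : ℂ) (hs : 2 ≤ s.re) :
    Real.Gamma s.re ≤ ‖Complex.Gamma s‖ * Real.exp (s.im^2 * (1/s.re^2 + 1/s.re)) := by
  have hx1 : (1:ℝ) ≤ s.re := by linarith
  have hs0 : s ≠ 0 := by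
    intro h; rw [h] at hs; simp at hs; linarith
  have key : ∀ n : ℕ, Real.GammaSeq s.re n
      ≤ ‖Complex.GammaSeq s n‖ * Real.exp (s.im^2 * (1/s.re^2 + 1/s.re)) := by
    intro n
    have hP : (0:ℝ) < ∏ j ∈ range (n+1), (s.re + j) := by
      apply Finset.prod_pos; intro j _; positivity
    have hfac : ∀ j ∈ range (n+1),
        ‖s + j‖ ≤ (s.re + j) * Real.exp (s.im^2 * (s.re + j)⁻¹^2) := by
      intro j _
      have hxj : (0:ℝ) < s.re + j := by positivity
      set t : ℝ := s.im^2 * (s.re + j)⁻¹^2 with htdef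
      have ht : 0 ≤ t := by positivity
      have hid : t * (s.re + j)^2 = s.im^2 := by
        rw [htdef, inv_pow]; field_simp
      have h2 : ‖s + j‖^2 ≤ ((s.re + j) * Real.exp t)^2 := by
        rw [Complex.sq_norm, Complex.normSq_apply, mul_pow, sq (Real.exp t)]
        have hre : (s + (j:ℂ)).re = s.re + j := by simp
        have him : (s + (j:ℂ)).im = s.im := by simp
        rw [hre, him]
        have h3 : (s.re + j)^2 * ((1 + t) * 1) ≤ (s.re + j)^2 * (Real.exp t * Real.exp t) :=
          mul_le_mul_of_nonneg_left
            (mul_le_mul (Real.add_one_le_exp t |>.trans_eq' (by ring)) (Real.one_le_exp ht)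
              zero_le_one (Real.exp_pos t).le) (sq_nonneg _)
        nlinarith [h3]
      have hb : (0:ℝ) ≤ (s.re + j) * Real.exp t := by positivity
      exact (pow_le_pow_iff_left₀ (norm_nonneg _) hb (by norm_num)).mp h2
    have hprod : ∏ j ∈ range (n+1), ‖s + j‖
        ≤ (∏ j ∈ range (n+1), (s.re + j)) * Real.exp (s.im^2 * (1/s.re^2 + 1/s.re)) := by
      calc ∏ j ∈ range (n+1), ‖s + j‖
          ≤ ∏ j ∈ range (n+1), ((s.re + j) * Real.exp (s.im^2 * (s.re + j)⁻¹^2)) :=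
            Finset.prod_le_prod (fun j _ => norm_nonneg _) hfac
        _ = (∏ j ∈ range (n+1), (s.re + j))
              * Real.exp (∑ j ∈ range (n+1), s.im^2 * (s.re + j)⁻¹^2) := by
            rw [Finset.prod_mul_distrib, Real.exp_sum]
        _ ≤ _ := by
            apply mul_le_mul_of_nonneg_left _ (le_of_lt hP)
            apply Real.exp_le_exp.mpr
            rw [← Finset.mul_sum]
            exact mul_le_mul_of_nonneg_left (sumsq s.re hx1 n) (sq_nonneg _)
    have hPc : (0:ℝ) < ∏ j ∈ range (n+1), ‖s + j‖ := by
      apply Finset.prod_pos; intro j _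
      apply norm_pos_iff.mpr
      intro h
      have h5 : (s + (j:ℂ)).re = 0 := by rw [h]; simp
      simp only [Complex.add_re, Complex.natCast_re] at h5
      have hxj : (0:ℝ) < s.re + j := by positivity
      linarith
    have habsSeq : ‖Complex.GammaSeq s n‖
        = (n:ℝ) ^ s.re * n.factorial / ∏ j ∈ range (n+1), ‖s + j‖ := by
      rw [Complex.GammaSeq, norm_div, norm_mul, norm_prod]
      congr 2
      · rcases Nat.eq_zero_or_pos n with rfl | hn
        · rw [Nat.cast_zero, Complex.zero_cpow hs0, Nat.cast_zero,
            Real.zero_rpow (by linarith : s.re ≠ 0), norm_zero]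
        · rw [show ((n:ℂ)) = ((n:ℝ):ℂ) by push_cast; ring,
            Complex.norm_cpow_eq_rpow_re_of_pos (by exact_mod_cast hn)]
      · simp
    rw [Real.GammaSeq, habsSeq, div_mul_eq_mul_div, div_le_div_iff₀ hP hPc]
    have hnum : (0:ℝ) ≤ (n:ℝ) ^ s.re * n.factorial := by positivity
    calc (n:ℝ) ^ s.re * n.factorial * ∏ j ∈ range (n+1), ‖s + j‖
        ≤ (n:ℝ) ^ s.re * n.factorial
            * ((∏ j ∈ range (n+1), (s.re + j)) * Real.exp (s.im^2 * (1/s.re^2 + 1/s.re))) :=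
          mul_le_mul_of_nonneg_left hprod hnum
      _ = (n:ℝ) ^ s.re * ↑n.factorial * Real.exp (s.im^2 * (1/s.re^2 + 1/s.re))
            * ∏ j ∈ range (n+1), (s.re + j) := by ring
  exact le_of_tendsto_of_tendsto' (Real.GammaSeq_tendsto_Gamma s.re)
    (((Complex.GammaSeq_tendsto_Gamma s).norm).mul_const _) (fun n => by
      simpa using key n)

lemma gammaRatio (a x : ℝ) (ha : 0 < a) (hx : 2 ≤ x) :
    Real.Gamma x * (x + min a 1 - 1) ^ (min a 1) ≤ Real.Gamma (x + a) := by
  set b := min a 1 with hbdef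
  have hb0 : 0 < b := lt_min ha one_pos
  have hb1 : b ≤ 1 := min_le_right _ _
  have hba : b ≤ a := min_le_left _ _
  have hw : (0:ℝ) < x + b - 1 := by linarith
  have hmono : Real.Gamma (x + b) ≤ Real.Gamma (x + a) := by
    rcases eq_or_lt_of_le hba with h | h
    · rw [h]
    · exact le_of_lt (Real.Gamma_strictMonoOn_Ici (by simp only [Set.mem_Ici]; linarith)
        (by simp only [Set.mem_Ici]; linarith) (by linarith))
  refine le_trans ?_ hmono
  rcases eq_or_lt_of_le hb1 with hb1' | hb1'
  · rw [hb1', Real.rpow_one, show x + 1 - 1 = x by ring,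
      Real.Gamma_add_one (by linarith : x ≠ 0), mul_comm]
  · -- 0 < b < 1
    have hG : Real.Gamma x ≤ Real.Gamma (x + b) ^ (1 - b) * Real.Gamma (x + b - 1) ^ b := by
      have := Real.Gamma_mul_add_mul_le_rpow_Gamma_mul_rpow_Gamma
        (s := x + b) (t := x + b - 1) (a := 1 - b) (b := b)
        (by linarith) hw (by linarith) hb0 (by ring)
      have harg : (1 - b) * (x + b) + b * (x + b - 1) = x := by ring
      rwa [harg] at this
    have hGadd : Real.Gamma (x + b) = (x + b - 1) * Real.Gamma (x + b - 1) := by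
      have := Real.Gamma_add_one (ne_of_gt hw)
      rw [show x + b - 1 + 1 = x + b by ring] at this
      exact this
    have hGpos : 0 < Real.Gamma (x + b - 1) := Real.Gamma_pos_of_pos hw
    have hGbpos : 0 < Real.Gamma (x + b) := Real.Gamma_pos_of_pos (by linarith)
    have hrhs : Real.Gamma (x + b) ^ (1 - b) * Real.Gamma (x + b - 1) ^ b
        = Real.Gamma (x + b) / (x + b - 1) ^ b := by
      have h1 : Real.Gamma (x + b - 1) = Real.Gamma (x + b) / (x + b - 1) := by
        rw [hGadd]; field_simp
      rw [h1, Real.div_rpow hGbpos.le hw.le, ← mul_div_assoc,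
        ← Real.rpow_add hGbpos]
      norm_num
    rw [hrhs] at hG
    rw [← le_div_iff₀ (by positivity)]
    rwa [div_eq_mul_inv, ← Real.rpow_neg hw.le] at hG ⊢
    

lemma poch_abs (γ : ℂ) : ∀ k : ℕ,
    ‖(ascPochhammer ℂ k).eval γ‖ ≤ k.factorial * (1 + ‖γ‖)^k := by
  intro k
  induction k with
  | zero => simp
  | succ m ih =>
    rw [ascPochhammer_succ_right]
    simp only [Polynomial.eval_mul, Polynomial.eval_add, Polynomial.eval_X,
      Polynomial.eval_natCast, norm_mul]
    have h1 : ‖γ + m‖ ≤ (m + 1) * (1 + ‖γ‖) := by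
      calc ‖γ + m‖ ≤ ‖γ‖ + ‖(m:ℂ)‖ := norm_add_le _ _
        _ = ‖γ‖ + m := by rw [Complex.norm_natCast]
        _ ≤ (m + 1) * (1 + ‖γ‖) := by nlinarith [norm_nonneg γ, Nat.cast_nonneg (α := ℝ) m]
    calc ‖(ascPochhammer ℂ m).eval γ‖ * ‖γ + m‖
        ≤ (m.factorial * (1 + ‖γ‖)^m) * ((m + 1) * (1 + ‖γ‖)) := by
          apply mul_le_mul ih h1 (norm_nonneg _) (by positivity)
      _ = (m+1).factorial * (1 + ‖γ‖)^(m+1) := by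
          rw [Nat.factorial_succ]; push_cast; ring

lemma prabhakar_summable (α β γ z : ℂ) (hα : 0 < α.re) :
    Summable (fun k : ℕ => (ascPochhammer ℂ k).eval γ * z ^ k /
      ((k.factorial : ℂ) * Complex.Gamma (α * k + β))) := by
  set x : ℕ → ℝ := fun k => α.re * k + β.re with hxdef
  have hre : ∀ k : ℕ, (α * k + β).re = x k := by intro k; simp [hxdef]
  have him : ∀ k : ℕ, (α * k + β).im = α.im * k + β.im := by intro k; simp
  set p : ℝ := |α.im| + |β.im| with hpdef
  have hp0 : 0 ≤ p := by positivity
  set C : ℝ := 4 * p^2 / α.re with hCdef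
  have hC0 : 0 ≤ C := by positivity
  set Q : ℝ := (1 + ‖γ‖) * (‖z‖ + 1) * Real.exp C with hQdef
  have hQ0 : 0 < Q := by positivity
  set u : ℕ → ℝ := fun k => Q^k / Real.Gamma (x k) with hudef
  have hxT : Tendsto x atTop atTop :=
    tendsto_atTop_add_const_right _ β.re (tendsto_natCast_atTop_atTop.const_mul_atTop hα)
  clear_value x p C Q u
  have hx2 : ∀ᶠ k : ℕ in atTop, 2 ≤ x k := hxT.eventually_ge_atTop 2
  -- c_k ≤ C * k eventually
  have hcbound : ∀ᶠ k : ℕ in atTop,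
      (α.im * k + β.im)^2 * (1/(x k)^2 + 1/(x k)) ≤ C * k := by
    have hhalf : Tendsto (fun k : ℕ => α.re * k / 2) atTop atTop :=
      (tendsto_natCast_atTop_atTop.const_mul_atTop hα).atTop_div_const two_pos
    filter_upwards [hx2, hhalf.eventually_ge_atTop (-β.re), eventually_ge_atTop 1]
      with k h2 hhalfk h1
    have hk1 : (1:ℝ) ≤ k := by exact_mod_cast h1
    have hxk : α.re * k / 2 ≤ x k := by simp only [hxdef]; linarith
    have hxpos : (0:ℝ) < x k := by linarith
    have hy : |α.im * k + β.im| ≤ p * k := by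
      calc |α.im * k + β.im| ≤ |α.im * k| + |β.im| := abs_add_le _ _
        _ = |α.im| * k + |β.im| := by rw [abs_mul, Nat.abs_cast]
        _ ≤ |α.im| * k + |β.im| * k := by nlinarith [abs_nonneg β.im]
        _ = p * k := by rw [hpdef]; ring
    have hy2 : (α.im * k + β.im)^2 ≤ (p * k)^2 := by
      rw [← _root_.sq_abs (α.im * k + β.im)]
      exact pow_le_pow_left₀ (abs_nonneg _) hy 2
    have hfrac : 1/(x k)^2 + 1/(x k) ≤ 4 / (α.re * k) := by
      have h3 : 1/(x k)^2 ≤ 1/(x k) := by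
        rw [one_div, one_div, inv_le_inv₀ (by positivity) hxpos]
        nlinarith
      have h4 : 1/(x k) ≤ 2/(α.re * k) := by
        have hx4 : 1 * (α.re * (k:ℝ)) ≤ 2 * x k := by
          simp only [hxdef]; linarith [hhalfk]
        rw [div_le_div_iff₀ hxpos (by positivity)]
        exact hx4
      have h5 : (2:ℝ) * (2/(α.re * k)) = 4/(α.re * k) := by ring
      linarith [mul_le_mul_of_nonneg_left h4 (by norm_num : (0:ℝ) ≤ 2)]
    have hk0 : (0:ℝ) < k := by linarith
    calc (α.im * k + β.im)^2 * (1/(x k)^2 + 1/(x k))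
        ≤ (p * k)^2 * (4 / (α.re * k)) := by
          apply mul_le_mul hy2 hfrac (by positivity) (by positivity)
      _ = C * k := by
          have hαne : α.re ≠ 0 := ne_of_gt hα
          have hkne : (k:ℝ) ≠ 0 := ne_of_gt hk0
          rw [hCdef]
          field_simp
  -- norm bound
  have hbound : ∀ᶠ k : ℕ in atTop,
      ‖(ascPochhammer ℂ k).eval γ * z ^ k /
        ((k.factorial : ℂ) * Complex.Gamma (α * k + β))‖ ≤ u k := by
    filter_upwards [hx2, hcbound] with k h2 hck
    have hGpos : 0 < Real.Gamma (x k) := Real.Gamma_pos_of_pos (by linarith)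
    have hlb : Real.Gamma (x k) / Real.exp (C * k) ≤ ‖Complex.Gamma (α * k + β)‖ := by
      have hgl := gammaLB (α * k + β) (by rw [hre]; exact h2)
      rw [hre, him] at hgl
      rw [div_le_iff₀ (Real.exp_pos _)]
      calc Real.Gamma (x k)
          ≤ ‖Complex.Gamma (α * k + β)‖
            * Real.exp ((α.im * k + β.im)^2 * (1/(x k)^2 + 1/(x k))) := hgl
        _ ≤ ‖Complex.Gamma (α * k + β)‖ * Real.exp (C * k) :=
            mul_le_mul_of_nonneg_left (Real.exp_le_exp.mpr hck) (norm_nonneg _)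
    have hnum : ‖(ascPochhammer ℂ k).eval γ * z ^ k‖
        ≤ k.factorial * ((1 + ‖γ‖) * (‖z‖ + 1))^k := by
      rw [norm_mul, norm_pow, mul_pow, ← mul_assoc]
      exact mul_le_mul (poch_abs γ k) (pow_le_pow_left₀ (norm_nonneg z) (by linarith) k)
        (by positivity) (by positivity)
    have hfacpos : (0:ℝ) < k.factorial := by exact_mod_cast k.factorial_pos
    have hfacne : (k.factorial : ℝ) ≠ 0 := ne_of_gt hfacpos
    have hE : Real.exp (C * (k:ℕ)) = (Real.exp C)^k := by
      rw [mul_comm, Real.exp_nat_mul]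
    have hnormeq : ‖(ascPochhammer ℂ k).eval γ * z ^ k /
        ((k.factorial : ℂ) * Complex.Gamma (α * k + β))‖
        = ‖(ascPochhammer ℂ k).eval γ * z ^ k‖
          / ((k.factorial : ℝ) * ‖Complex.Gamma (α * k + β)‖) := by
      rw [norm_div]
      congr 1
      rw [norm_mul, Complex.norm_natCast]
    rw [hnormeq]
    calc ‖(ascPochhammer ℂ k).eval γ * z ^ k‖
          / ((k.factorial : ℝ) * ‖Complex.Gamma (α * k + β)‖)
        ≤ (k.factorial * ((1 + ‖γ‖) * (‖z‖ + 1))^k)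
          / ((k.factorial : ℝ) * (Real.Gamma (x k) / Real.exp (C * k))) := by
          apply div_le_div₀ (by positivity) hnum (by positivity)
          exact mul_le_mul_of_nonneg_left hlb hfacpos.le
      _ = u k := by
          simp only [hudef]
          conv_rhs => rw [hQdef, mul_pow, ← hE]
          rw [mul_div_mul_left _ _ hfacne, div_div_eq_mul_div]
  -- summability of majorant via ratio test
  have hu : Summable u := by
    apply summable_of_ratio_norm_eventually_le (r := 1/2) (by norm_num)
    set b : ℝ := min α.re 1 with hbdef
    have hb0 : 0 < b := lt_min hα one_pos
    have hT : Tendsto (fun k : ℕ => (x k + b - 1) ^ b) atTop atTop := by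
      have h := (tendsto_rpow_atTop hb0).comp (tendsto_atTop_add_const_right atTop (b - 1) hxT)
      simpa only [Function.comp_def, ← add_sub_assoc] using h
    filter_upwards [hx2, hT.eventually_ge_atTop (2 * Q)] with k h2 hrk
    have hGpos : 0 < Real.Gamma (x k) := Real.Gamma_pos_of_pos (by linarith)
    have hxsucc : x (k+1) = x k + α.re := by simp only [hxdef]; push_cast; ring
    have hratio := gammaRatio α.re (x k) hα h2
    have hG2 : 2 * Q * Real.Gamma (x k) ≤ Real.Gamma (x (k+1)) := by
      rw [hxsucc]
      calc 2 * Q * Real.Gamma (x k) ≤ (x k + b - 1) ^ b * Real.Gamma (x k) := by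
            apply mul_le_mul_of_nonneg_right hrk hGpos.le
        _ ≤ Real.Gamma (x k + α.re) := by rw [mul_comm]; exact hratio
    have hGpos' : 0 < Real.Gamma (x (k+1)) := lt_of_lt_of_le (by positivity) hG2
    have hu1 : u (k+1) ≤ 1/2 * u k := by
      simp only [hudef]
      rw [div_le_iff₀ hGpos']
      calc Q^(k+1) = (1/2 * (Q^k / Real.Gamma (x k))) * (2 * Q * Real.Gamma (x k)) := by
            field_simp; ring
        _ ≤ (1/2 * (Q^k / Real.Gamma (x k))) * Real.Gamma (x (k+1)) := by
            apply mul_le_mul_of_nonneg_left hG2 (by positivity)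
    have hu0 : 0 ≤ u k := by simp only [hudef]; positivity
    have hu0' : 0 ≤ u (k+1) := by simp only [hudef]; positivity
    rw [Real.norm_eq_abs, Real.norm_eq_abs, _root_.abs_of_nonneg hu0, _root_.abs_of_nonneg hu0']
    exact hu1
  exact Summable.of_norm_bounded_eventually_nat hu hbound

lemma gammaInvRec (s : ℂ) : (Complex.Gamma s)⁻¹ = s * (Complex.Gamma (s+1))⁻¹ := by
  rcases eq_or_ne s 0 with rfl | hs
  · simp [Complex.Gamma_zero]
  · rw [Complex.Gamma_add_one s hs, mul_inv, ← mul_assoc, mul_inv_cancel₀ hs, one_mul]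

lemma pochShift (γ : ℂ) (k : ℕ) :
    γ * (ascPochhammer ℂ k).eval (γ+1) = (ascPochhammer ℂ k).eval γ * (γ + k) := by
  have h1 : (ascPochhammer ℂ (k+1)).eval γ = γ * (ascPochhammer ℂ k).eval (γ+1) := by
    rw [ascPochhammer_succ_left]; simp [Polynomial.eval_comp]
  have h2 : (ascPochhammer ℂ (k+1)).eval γ = (ascPochhammer ℂ k).eval γ * (γ + k) := by
    rw [ascPochhammer_succ_right]; simp
  rw [← h1, h2]

lemma termwise (α β γ z : ℂ) (k : ℕ) :
    (ascPochhammer ℂ k).eval γ * z ^ k / ((Nat.factorial k : ℂ) * Complex.Gamma (α*k + (β-1)))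
      + (1 - β + α*γ) * ((ascPochhammer ℂ k).eval γ * z ^ k
          / ((Nat.factorial k : ℂ) * Complex.Gamma (α*k+β)))
    = ((ascPochhammer ℂ k).eval (γ+1) * z ^ k
        / ((Nat.factorial k : ℂ) * Complex.Gamma (α*k+β))) * (α*γ) := by
  have hrec : (Complex.Gamma (α*k + (β-1)))⁻¹ = (α*k+β-1) * (Complex.Gamma (α*k+β))⁻¹ := by
    have h := gammaInvRec (α*k+β-1)
    rw [show α*(k:ℂ)+β-1+1 = α*k+β by ring] at h
    rw [show α*(k:ℂ)+(β-1) = α*k+β-1 by ring, h]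
  simp only [div_eq_mul_inv, mul_inv]
  rw [hrec]
  linear_combination (-(α * z^k * (Complex.Gamma (α*(k:ℂ)+β))⁻¹ * ((Nat.factorial k : ℂ))⁻¹)) *
    pochShift γ k

end PrabhakarAux


/-- The Prabhakar (three-parameter Mittag-Leffler) function, defined by its
entire power series, with reciprocal Gamma understood as `0` at poles. -/
noncomputable def prabhakar (α β γ z : ℂ) : ℂ :=
  ∑' k : ℕ, (ascPochhammer ℂ k).eval γ * z ^ k / ((Nat.factorial k : ℂ) * Complex.Gamma (α * k + β))

theorem prabhakar_reduction (α β γ : ℂ) (hα : 0 < α.re) (hα0 : α ≠ 0) (hγ : γ ≠ 0) (z : ℂ) :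
    prabhakar α β (γ + 1) z =
      (prabhakar α (β - 1) γ z + (1 - β + α * γ) * prabhakar α β γ z) / (α * γ) := by
  have hαγ : α * γ ≠ 0 := mul_ne_zero hα0 hγ
  have hs1 := prabhakar_summable α (β - 1) γ z hα
  have hs2 := prabhakar_summable α β γ z hα
  rw [prabhakar, prabhakar, prabhakar, eq_div_iff hαγ, ← tsum_mul_right,
    ← tsum_mul_left, ← Summable.tsum_add hs1 (hs2.mul_left _)]
  exact tsum_congr fun k => (termwise α β γ z k).symm
end

section
/- Differentiation identity: for real α > 0, β ∈ ℝ, γ, λ ∈ ℂ, a positive integer m, and t > 0, (d^m/dt^m)[t^{β−1} E_{α,β}^γ(λ t^α)] = t^{β−m−1} E_{α,β−m}^γ(λ t^α). -/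
open scoped Real
open Complex Filter

lemma Gamma_ub (y s : ℝ) (hy : 0 < y) (hs0 : 0 ≤ s) (hs1 : s ≤ 1) :
    Real.Gamma (y + s) ≤ Real.Gamma y * y ^ s := by
  have hG : 0 < Real.Gamma y := Real.Gamma_pos_of_pos hy
  have hG1 : 0 < Real.Gamma (y + 1) := Real.Gamma_pos_of_pos (by linarith)
  have hGs : 0 < Real.Gamma (y + s) := Real.Gamma_pos_of_pos (by linarith)
  have hc := Real.convexOn_log_Gamma.2 (Set.mem_Ioi.2 hy) (Set.mem_Ioi.2 (by linarith : (0:ℝ) < y + 1))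
    (by linarith : (0:ℝ) ≤ 1 - s) hs0 (by ring)
  simp only [smul_eq_mul, Function.comp_apply] at hc
  have hpt : (1 - s) * y + s * (y + 1) = y + s := by ring
  rw [hpt] at hc
  have hadd : Real.Gamma (y + 1) = y * Real.Gamma y := Real.Gamma_add_one hy.ne'
  rw [hadd, Real.log_mul hy.ne' hG.ne'] at hc
  have : Real.log (Real.Gamma (y + s)) ≤ Real.log (Real.Gamma y) + s * Real.log y := by linarith
  calc Real.Gamma (y + s) = Real.exp (Real.log (Real.Gamma (y + s))) := (Real.exp_log hGs).symm
    _ ≤ Real.exp (Real.log (Real.Gamma y) + s * Real.log y) := Real.exp_le_exp.2 this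
    _ = Real.Gamma y * y ^ s := by
        rw [Real.exp_add, Real.exp_log hG, Real.rpow_def_of_pos hy]; ring

lemma Gamma_lb1 (x a : ℝ) (hx : 1 ≤ x) (ha0 : 0 < a) (ha1 : a ≤ 1) :
    Real.Gamma x * (x + a - 1) ^ a ≤ Real.Gamma (x + a) := by
  set y := x + a - 1 with hy_def
  have hy : 0 < y := by simp only [hy_def]; linarith
  have h1 : Real.Gamma (y + (1 - a)) ≤ Real.Gamma y * y ^ (1 - a) :=
    Gamma_ub y (1 - a) hy (by linarith) (by linarith)
  have h2 : y + (1 - a) = x := by simp only [hy_def]; ring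
  have h3 : Real.Gamma (x + a) = y * Real.Gamma y := by
    have : x + a = y + 1 := by simp only [hy_def]; ring
    rw [this, Real.Gamma_add_one hy.ne']
  rw [h2] at h1
  have h4 : Real.Gamma x * y ^ a ≤ Real.Gamma y * y ^ (1 - a) * y ^ a :=
    mul_le_mul_of_nonneg_right h1 (Real.rpow_nonneg hy.le a)
  calc Real.Gamma x * y ^ a ≤ Real.Gamma y * y ^ (1 - a) * y ^ a := h4
    _ = Real.Gamma y * y := by
        rw [mul_assoc, ← Real.rpow_add hy]; norm_num
    _ = Real.Gamma (x + a) := by rw [h3, mul_comm]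

lemma Gamma_lb (x α : ℝ) (hx : 1 ≤ x) (hα : 0 < α) :
    Real.Gamma x * (x + min α 1 - 1) ^ α ≤ Real.Gamma (x + α) := by
  set a := min α 1 with ha_def
  have ha0 : 0 < a := lt_min hα one_pos
  have ha1 : a ≤ 1 := min_le_right _ _
  have haα : a ≤ α := min_le_left _ _
  set y := x + a - 1 with hy_def
  have hy : 0 < y := by simp only [hy_def]; linarith
  have hx0 : 0 < x := by linarith
  have hGx : 0 < Real.Gamma x := Real.Gamma_pos_of_pos hx0
  have hGxa : 0 < Real.Gamma (x + a) := Real.Gamma_pos_of_pos (by linarith)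
  have hGxα : 0 < Real.Gamma (x + α) := Real.Gamma_pos_of_pos (by linarith)
  -- step 2: log version of Gamma_lb1
  have h1 : Real.Gamma x * y ^ a ≤ Real.Gamma (x + a) := Gamma_lb1 x a hx ha0 ha1
  have h2 : Real.log (Real.Gamma x) + a * Real.log y ≤ Real.log (Real.Gamma (x + a)) := by
    have := Real.log_le_log (by positivity) h1
    rwa [Real.log_mul hGx.ne' (by positivity), Real.log_rpow hy] at this
  -- step 3: convexity
  set θ := a / α with hθ_def
  have hθ0 : 0 < θ := div_pos ha0 hα
  have hθ1 : θ ≤ 1 := (div_le_one hα).2 haα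
  have hc := Real.convexOn_log_Gamma.2 (Set.mem_Ioi.2 hx0)
    (Set.mem_Ioi.2 (by linarith : (0:ℝ) < x + α)) (by linarith : (0:ℝ) ≤ 1 - θ) hθ0.le (by ring)
  simp only [smul_eq_mul, Function.comp_apply] at hc
  have hpt : (1 - θ) * x + θ * (x + α) = x + a := by
    have hθα' : θ * α = a := by rw [hθ_def]; exact div_mul_cancel₀ a hα.ne'
    linear_combination hθα'
  rw [hpt] at hc
  -- step 4 : combine
  have h5 : Real.log (Real.Gamma x) + α * Real.log y ≤ Real.log (Real.Gamma (x + α)) := by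
    have h4 : a * Real.log y ≤ θ * (Real.log (Real.Gamma (x + α)) - Real.log (Real.Gamma x)) := by
      nlinarith [h2, hc]
    have hθα : θ * α = a := by rw [hθ_def]; exact div_mul_cancel₀ a hα.ne'
    have h6 := mul_le_mul_of_nonneg_left h4 hα.le
    have h7 : α * (θ * (Real.log (Real.Gamma (x + α)) - Real.log (Real.Gamma x)))
        = a * (Real.log (Real.Gamma (x + α)) - Real.log (Real.Gamma x)) := by
      rw [← mul_assoc, mul_comm α θ, hθα]
    rw [h7, show α * (a * Real.log y) = a * (α * Real.log y) by ring] at h6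
    have h8 := le_of_mul_le_mul_left h6 ha0
    linarith
  -- step 5: exponentiate
  calc Real.Gamma x * y ^ α = Real.exp (Real.log (Real.Gamma x) + α * Real.log y) := by
        rw [Real.exp_add, Real.exp_log hGx, Real.rpow_def_of_pos hy]; ring
    _ ≤ Real.exp (Real.log (Real.Gamma (x + α))) := Real.exp_le_exp.2 h5
    _ = Real.Gamma (x + α) := Real.exp_log hGxα

/-- coefficient of the Prabhakar series -/

noncomputable def pcoef (α β : ℝ) (γ lam : ℂ) (k : ℕ) : ℂ :=
  (ascPochhammer ℂ k).eval γ * lam ^ k /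
    ((Nat.factorial k : ℂ) * Complex.Gamma ((α * k + β : ℝ) : ℂ))

lemma pcoef_norm_succ (α β : ℝ) (γ lam : ℂ) (k : ℕ) (h2 : 2 ≤ α * k + β) (hα : 0 < α) :
    ‖pcoef α β γ lam (k + 1)‖ =
      ‖(ascPochhammer ℂ k).eval γ‖ * ‖γ + k‖ * (‖lam‖ ^ k * ‖lam‖) /
        ((k + 1) * (Nat.factorial k : ℝ) * Real.Gamma (α * k + β + α)) := by
  have hx : 0 < α * k + β + α := by linarith
  have harg : (α * (↑(k+1) : ℝ) + β) = α * k + β + α := by push_cast; ring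
  rw [pcoef, harg]
  rw [ascPochhammer_succ_right, Polynomial.eval_mul, Polynomial.eval_add, Polynomial.eval_X,
    Polynomial.eval_natCast]
  rw [norm_div, norm_mul, norm_mul, norm_pow, pow_succ, norm_mul, Complex.norm_natCast,
    Complex.Gamma_ofReal, Complex.norm_real, Real.norm_of_nonneg (Real.Gamma_pos_of_pos hx).le,
    Nat.factorial_succ]
  push_cast
  ring

lemma pcoef_norm (α β : ℝ) (γ lam : ℂ) (k : ℕ) (h2 : 2 ≤ α * k + β) :
    ‖pcoef α β γ lam k‖ =
      ‖(ascPochhammer ℂ k).eval γ‖ * ‖lam‖ ^ k /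
        ((Nat.factorial k : ℝ) * Real.Gamma (α * k + β)) := by
  have hx : 0 < α * k + β := by linarith
  rw [pcoef, norm_div, norm_mul, norm_pow, norm_mul, Complex.norm_natCast,
    Complex.Gamma_ofReal, Complex.norm_real, Real.norm_of_nonneg (Real.Gamma_pos_of_pos hx).le]

lemma summable_pcoef (α β : ℝ) (hα : 0 < α) (γ lam : ℂ) (R : ℝ) (hR : 0 < R) :
    Summable (fun k : ℕ => ‖pcoef α β γ lam k‖ * R ^ (α * k)) := by
  set D : ℝ := 2 * (‖γ‖ + 1) * (‖lam‖ + 1) * (R ^ α + 1) with hD_def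
  have hD0 : 0 < D := by positivity
  -- eventual hypotheses
  have tx : Tendsto (fun k : ℕ => α * k + β) atTop atTop :=
    tendsto_atTop_add_const_right _ β (tendsto_natCast_atTop_atTop.const_mul_atTop hα)
  have h1 : ∀ᶠ k : ℕ in atTop, 2 ≤ α * k + β := tx.eventually_ge_atTop 2
  have h2 : ∀ᶠ k : ℕ in atTop, D ≤ (α * k + β + min α 1 - 1) ^ α := by
    have t2 : Tendsto (fun k : ℕ => (α * k + β + min α 1 - 1) ^ α) atTop atTop :=
      (tendsto_rpow_atTop hα).comp
        ((tendsto_atTop_add_const_right _ (min α 1 - 1) tx).congr (fun k => by ring))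
    exact t2.eventually_ge_atTop D
  refine summable_of_ratio_norm_eventually_le (r := 1/2) (by norm_num) ?_
  filter_upwards [h1, h2] with k hk1 hk2
  have hx : 0 < α * k + β := by linarith
  have hG : 0 < Real.Gamma (α * k + β) := Real.Gamma_pos_of_pos hx
  have hG' : 0 < Real.Gamma (α * k + β + α) := Real.Gamma_pos_of_pos (by linarith)
  have hK : (0:ℝ) < (Nat.factorial k : ℝ) := by positivity
  have hGD : Real.Gamma (α * k + β) * D ≤ Real.Gamma (α * k + β + α) := by
    calc Real.Gamma (α * k + β) * D
        ≤ Real.Gamma (α * k + β) * (α * k + β + min α 1 - 1) ^ α :=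
          mul_le_mul_of_nonneg_left hk2 hG.le
      _ ≤ Real.Gamma (α * k + β + α) := Gamma_lb _ _ (by linarith) hα
  have hγk : ‖γ + (k : ℂ)‖ ≤ (‖γ‖ + 1) * (k + 1) := by
    calc ‖γ + (k : ℂ)‖ ≤ ‖γ‖ + ‖(k : ℂ)‖ := norm_add_le _ _
      _ = ‖γ‖ + k := by rw [Complex.norm_natCast]
      _ ≤ (‖γ‖ + 1) * (k + 1) := by nlinarith [norm_nonneg γ, Nat.cast_nonneg (α := ℝ) k]
  -- rewrite both sides
  have hRk : R ^ (α * ((k : ℝ) + 1)) = R ^ (α * k) * R ^ α := by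
    rw [← Real.rpow_add hR]; ring_nf
  set P := ‖(ascPochhammer ℂ k).eval γ‖ with hP_def
  have hP0 : 0 ≤ P := norm_nonneg _
  have hRα : 0 ≤ R ^ α := Real.rpow_nonneg hR.le α
  have hRk0 : 0 ≤ R ^ (α * k) := Real.rpow_nonneg hR.le _
  have hl0 : 0 ≤ ‖lam‖ := norm_nonneg _
  rw [Real.norm_of_nonneg (by positivity), Real.norm_of_nonneg (by positivity),
    pcoef_norm_succ α β γ lam k hk1 hα, pcoef_norm α β γ lam k hk1,
    show ((k+1:ℕ):ℝ) = (k:ℝ)+1 by push_cast; ring, hRk]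
  rw [div_mul_eq_mul_div, div_mul_eq_mul_div, div_mul_eq_mul_div, ← mul_div_assoc, div_div,
    div_le_div_iff₀ (by positivity) (by positivity)]
  calc P * ‖γ + (k:ℂ)‖ * (‖lam‖ ^ k * ‖lam‖) * (R ^ (α * (k:ℝ)) * R ^ α) *
        ((Nat.factorial k : ℝ) * Real.Gamma (α * k + β) * 2)
      ≤ P * ((‖γ‖ + 1) * ((k:ℝ) + 1)) * (‖lam‖ ^ k * (‖lam‖ + 1)) *
          (R ^ (α * (k:ℝ)) * (R ^ α + 1)) *
        ((Nat.factorial k : ℝ) * Real.Gamma (α * k + β) * 2) := by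
        gcongr <;> first | exact hγk | linarith
      _ = 1 * (P * ‖lam‖ ^ k * R ^ (α * (k:ℝ))) *
          (((k:ℝ) + 1) * (Nat.factorial k : ℝ) * (Real.Gamma (α * k + β) * D)) := by
        rw [hD_def]; ring
      _ ≤ 1 * (P * ‖lam‖ ^ k * R ^ (α * (k:ℝ))) *
          (((k:ℝ) + 1) * (Nat.factorial k : ℝ) * Real.Gamma (α * (k:ℝ) + β + α)) := by
        gcongr

lemma div_Gamma_succ' (w : ℂ) : w / Complex.Gamma (w + 1) = 1 / Complex.Gamma w := by
  by_cases hw : w = 0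
  · simp [hw, Complex.Gamma_zero]
  · rw [Complex.Gamma_add_one w hw]
    by_cases hG : Complex.Gamma w = 0
    · simp [hG]
    · field_simp

lemma pcoef_mul (α β : ℝ) (γ lam : ℂ) (k : ℕ) :
    pcoef α β γ lam k * ((α * k + β - 1 : ℝ) : ℂ) = pcoef α (β - 1) γ lam k := by
  simp only [pcoef]
  have e2 : ((α * k + β - 1 : ℝ) : ℂ) + 1 = ((α * k + β : ℝ) : ℂ) := by push_cast; ring
  have e3 : ((α * k + (β - 1) : ℝ) : ℂ) = ((α * k + β - 1 : ℝ) : ℂ) := by push_cast; ring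
  have h := div_Gamma_succ' ((α * k + β - 1 : ℝ) : ℂ)
  rw [e2] at h
  rw [e3]
  set w := ((α * k + β - 1 : ℝ) : ℂ) with hw
  set A := (ascPochhammer ℂ k).eval γ * lam ^ k with hA
  have step1 : A / ((Nat.factorial k : ℂ) * Complex.Gamma ((α * k + β : ℝ) : ℂ)) * w
      = A / (Nat.factorial k : ℂ) * (w / Complex.Gamma ((α * k + β : ℝ) : ℂ)) := by ring
  rw [step1, h]
  ring

/-- key pointwise identity -/
lemma kernel_eq_tsum (α β : ℝ) (γ lam : ℂ) (u : ℝ) (hu : 0 < u) :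
    ((u ^ (β - 1) : ℝ) : ℂ) * prabhakar α β γ (lam * ((u ^ α : ℝ) : ℂ)) =
      ∑' k : ℕ, pcoef α β γ lam k * ((u ^ (α * k + β - 1) : ℝ) : ℂ) := by
  rw [prabhakar, ← tsum_mul_left]
  refine tsum_congr fun k => ?_
  have h1 : ((u ^ α : ℝ) : ℂ) ^ k = ((u ^ (α * k) : ℝ) : ℂ) := by
    rw [← Complex.ofReal_pow, ← Real.rpow_natCast (u ^ α) k, ← Real.rpow_mul hu.le]
  have e1 : ((u ^ (α * k + β - 1) : ℝ) : ℂ) =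
      ((u ^ (α * k) : ℝ) : ℂ) * ((u ^ (β - 1) : ℝ) : ℂ) := by
    rw [← Complex.ofReal_mul, ← Real.rpow_add hu]
    norm_num
    congr 1
    ring
  have e2 : ((α : ℂ) * k + β) = ((α * k + β : ℝ) : ℂ) := by push_cast; ring
  rw [pcoef, e1, e2, mul_pow, h1]
  ring

set_option maxHeartbeats 1000000 in
lemma hasDerivAt_tsum_kernel (α : ℝ) (hα : 0 < α) (γ lam : ℂ) (β t : ℝ) (ht : 0 < t) :
    HasDerivAt (fun u : ℝ => ∑' k : ℕ, pcoef α β γ lam k * ((u ^ (α * k + β - 1) : ℝ) : ℂ))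
      (∑' k : ℕ, pcoef α (β - 1) γ lam k * ((t ^ (α * k + (β - 1) - 1) : ℝ) : ℂ)) t := by
  set DD : ℝ := (t / 2) ^ (β - 2) + (2 * t) ^ (β - 2) with hDD
  have hDD0 : 0 < DD := by positivity
  have hsum_t : Summable (fun k : ℕ => pcoef α β γ lam k * ((t ^ (α * k + β - 1) : ℝ) : ℂ)) := by
    refine Summable.of_norm ?_
    refine ((summable_pcoef α β hα γ lam t ht).mul_right (t ^ (β - 1))).congr fun k => ?_
    rw [norm_mul, Complex.norm_real, Real.norm_of_nonneg (Real.rpow_nonneg ht.le _)]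
    rw [show t ^ (α * k + β - 1) = t ^ (α * k) * t ^ (β - 1) by
      rw [← Real.rpow_add ht]; congr 1; ring]
    ring
  have hmem : t ∈ Set.Ioo (t / 2) (2 * t) := Set.mem_Ioo.mpr ⟨by linarith, by linarith⟩
  refine hasDerivAt_tsum_of_isPreconnected
    (u := fun k : ℕ => ‖pcoef α (β - 1) γ lam k‖ * (2 * t) ^ (α * k) * DD)
    (t := Set.Ioo (t / 2) (2 * t)) (y₀ := t) (y := t)
    (g := fun (k : ℕ) (u : ℝ) => pcoef α β γ lam k * ((u ^ (α * k + β - 1) : ℝ) : ℂ))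
    (g' := fun (k : ℕ) (u : ℝ) => pcoef α (β - 1) γ lam k * ((u ^ (α * k + (β - 1) - 1) : ℝ) : ℂ))
    (((summable_pcoef α (β - 1) hα γ lam (2 * t) (by linarith)).mul_right DD))
    isOpen_Ioo isPreconnected_Ioo (fun k y hy => ?_) (fun k y hy => ?_)
    hmem hsum_t hmem
  · -- HasDerivAt
    have hy0 : 0 < y := lt_trans (by linarith) hy.1
    have hd := (Real.hasDerivAt_rpow_const (x := y) (p := α * k + β - 1) (Or.inl hy0.ne')).ofReal_comp
    have hd2 := hd.const_mul (pcoef α β γ lam k)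
    refine hd2.congr_deriv ?_
    rw [Complex.ofReal_mul, ← mul_assoc, pcoef_mul α β γ lam k]
    congr 2
    ring
  · -- bound
    have hy0 : 0 < y := lt_trans (by linarith) hy.1
    rw [norm_mul, Complex.norm_real, Real.norm_of_nonneg (Real.rpow_nonneg hy0.le _)]
    have hsplit : y ^ (α * k + (β - 1) - 1) = y ^ (α * k) * y ^ (β - 2) := by
      rw [← Real.rpow_add hy0]; congr 1; ring
    rw [hsplit]
    show ‖pcoef α (β - 1) γ lam k‖ * (y ^ (α * k) * y ^ (β - 2)) ≤
      ‖pcoef α (β - 1) γ lam k‖ * (2 * t) ^ (α * k) * DD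
    have hb1 : y ^ (α * k) ≤ (2 * t) ^ (α * k) := Real.rpow_le_rpow hy0.le hy.2.le (by positivity)
    have hb2 : y ^ (β - 2) ≤ DD := by
      rcases le_or_gt 0 (β - 2) with h | h
      · have h1 : y ^ (β - 2) ≤ (2 * t) ^ (β - 2) := Real.rpow_le_rpow hy0.le hy.2.le h
        have h2 : (0:ℝ) ≤ (t / 2) ^ (β - 2) := Real.rpow_nonneg (by linarith) _
        rw [hDD]; linarith
      · have h1 : y ^ (β - 2) ≤ (t / 2) ^ (β - 2) :=
          Real.rpow_le_rpow_of_nonpos (by linarith) hy.1.le h.le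
        have h2 : (0:ℝ) ≤ (2 * t) ^ (β - 2) := Real.rpow_nonneg (by linarith) _
        rw [hDD]; linarith
    rw [mul_assoc]
    refine mul_le_mul_of_nonneg_left ?_ (norm_nonneg _)
    exact mul_le_mul hb1 hb2 (Real.rpow_nonneg hy0.le _) (Real.rpow_nonneg (by linarith) _)

lemma deriv_kernel (α : ℝ) (hα : 0 < α) (γ lam : ℂ) (β t : ℝ) (ht : 0 < t) :
    deriv (fun u : ℝ => ((u ^ (β - 1) : ℝ) : ℂ) * prabhakar α β γ (lam * ((u ^ α : ℝ) : ℂ))) t =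
      ((t ^ ((β - 1) - 1) : ℝ) : ℂ) *
        prabhakar α (((β - 1 : ℝ)) : ℂ) γ (lam * ((t ^ α : ℝ) : ℂ)) := by
  have heq : (fun u : ℝ => ((u ^ (β - 1) : ℝ) : ℂ) * prabhakar α β γ (lam * ((u ^ α : ℝ) : ℂ)))
      =ᶠ[nhds t] fun u : ℝ => ∑' k : ℕ, pcoef α β γ lam k * ((u ^ (α * k + β - 1) : ℝ) : ℂ) := by
    filter_upwards [Ioi_mem_nhds ht] with u hu
    exact kernel_eq_tsum α β γ lam u hu
  have hd := (hasDerivAt_tsum_kernel α hα γ lam β t ht).congr_of_eventuallyEq heq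
  rw [hd.deriv, kernel_eq_tsum α (β - 1) γ lam t ht]

lemma iterated_kernel (α : ℝ) (hα : 0 < α) (γ lam : ℂ) (m : ℕ) : ∀ (β t : ℝ), 0 < t →
    iteratedDeriv m
        (fun u : ℝ => ((u ^ (β - 1) : ℝ) : ℂ) * prabhakar α β γ (lam * ((u ^ α : ℝ) : ℂ))) t =
      ((t ^ (β - m - 1) : ℝ) : ℂ) * prabhakar α (β - m) γ (lam * ((t ^ α : ℝ) : ℂ)) := by
  induction m with
  | zero => intro β t ht; simp
  | succ n ih =>
    intro β t ht
    rw [iteratedDeriv_succ']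
    have heq : deriv (fun u : ℝ =>
          ((u ^ (β - 1) : ℝ) : ℂ) * prabhakar α β γ (lam * ((u ^ α : ℝ) : ℂ)))
        =ᶠ[nhds t] fun u : ℝ =>
          ((u ^ ((β - 1) - 1) : ℝ) : ℂ) *
            prabhakar α (((β - 1 : ℝ)) : ℂ) γ (lam * ((u ^ α : ℝ) : ℂ)) := by
      filter_upwards [Ioi_mem_nhds ht] with u hu
      exact deriv_kernel α hα γ lam β u hu
    rw [Filter.EventuallyEq.iteratedDeriv_eq n heq, ih (β - 1) t ht]
    have e1 : β - 1 - n - 1 = β - (n + 1 : ℕ) - 1 := by push_cast; ring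
    have e2 : ((β - 1 : ℝ) : ℂ) - (n : ℂ) = (β : ℂ) - ((n + 1 : ℕ) : ℂ) := by push_cast; ring
    rw [e1, e2]

theorem prabhakar_iteratedDeriv_kernel (α β : ℝ) (hα : 0 < α) (γ lam : ℂ)
    (m : ℕ) (hm : 0 < m) (t : ℝ) (ht : 0 < t) :
    iteratedDeriv m
        (fun u : ℝ => ((u ^ (β - 1) : ℝ) : ℂ) * prabhakar α β γ (lam * ((u ^ α : ℝ) : ℂ))) t =
      ((t ^ (β - m - 1) : ℝ) : ℂ) * prabhakar α (β - m) γ (lam * ((t ^ α : ℝ) : ℂ)) :=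
  iterated_kernel α hα γ lam m β t ht
end

section
/- Laplace transform of the generalized Prabhakar kernel: for real α > 0, β > 0, γ ∈ ℂ, z ∈ ℂ, and real s > 0 with s^α > |z|, ∫_0^∞ e^{−st} t^{β−1} E_{α,β}^γ(t^α z) dt = s^{αγ−β} (s^α − z)^{−γ} = s^{−β}(1 − z s^{−α})^{−γ}. -/
open scoped Real
open Complex Filter

noncomputable def binCoef (γ : ℂ) (n : ℕ) : ℂ :=
  (ascPochhammer ℂ n).eval γ / (Nat.factorial n : ℂ)

lemma binCoef_zero (γ : ℂ) : binCoef γ 0 = 1 := by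
  simp [binCoef]

lemma binCoef_succ (γ : ℂ) (n : ℕ) :
    binCoef γ (n + 1) = binCoef γ n * (γ + n) / (n + 1) := by
  have hf : ((n + 1).factorial : ℂ) = (n + 1) * n.factorial := by
    push_cast [Nat.factorial_succ]; ring
  rw [binCoef, binCoef, ascPochhammer_succ_eval, hf, div_mul_eq_mul_div, div_div,
    mul_comm ((n : ℂ) + 1)]

lemma norm_binCoef_succ (γ : ℂ) (n : ℕ) :
    ‖binCoef γ (n + 1)‖ = ‖binCoef γ n‖ * ‖γ + n‖ / (n + 1) := by
  rw [binCoef_succ, norm_div, norm_mul]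
  congr 1
  rw [show ((n : ℂ) + 1) = ((n + 1 : ℕ) : ℂ) by push_cast; ring, Complex.norm_natCast]
  push_cast
  ring

lemma summable_master (γ : ℂ) {r : ℝ} (h0 : 0 ≤ r) (hr : r < 1) :
    Summable (fun n : ℕ => ((n : ℝ) + 1) * ‖binCoef γ n‖ * r ^ n) := by
  set b : ℕ → ℝ := fun n => ((n : ℝ) + 1) * ‖binCoef γ n‖ * r ^ n with hb
  apply summable_of_ratio_norm_eventually_le (r := (1 + r) / 2) (by linarith)
  -- eventually bound
  have htend : Tendsto (fun n : ℕ => r * (1 + 1 / ((n : ℝ) + 1)) *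
      (1 + (‖γ‖ + 1) * (1 / ((n : ℝ) + 1)))) atTop
      (nhds (r * (1 + 0) * (1 + (‖γ‖ + 1) * 0))) := by
    apply Tendsto.mul
    · exact tendsto_const_nhds.mul
        (tendsto_const_nhds.add tendsto_one_div_add_atTop_nhds_zero_nat)
    · exact tendsto_const_nhds.add
        (tendsto_const_nhds.mul tendsto_one_div_add_atTop_nhds_zero_nat)
  have hlt : r * (1 + 0) * (1 + (‖γ‖ + 1) * 0) < (1 + r) / 2 := by
    simp; linarith
  filter_upwards [htend.eventually_le_const hlt] with n hn
  have hbn : 0 ≤ b n := by positivity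
  have hbn1 : 0 ≤ b (n + 1) := by positivity
  rw [Real.norm_of_nonneg hbn1, Real.norm_of_nonneg hbn]
  have key : b (n + 1) ≤ (r * (1 + 1 / ((n : ℝ) + 1)) *
      (1 + (‖γ‖ + 1) * (1 / ((n : ℝ) + 1)))) * b n := by
    rw [hb]
    simp only
    rw [norm_binCoef_succ]
    have hγn : ‖γ + (n : ℂ)‖ ≤ ‖γ‖ + n := by
      calc ‖γ + (n : ℂ)‖ ≤ ‖γ‖ + ‖(n : ℂ)‖ := norm_add_le _ _
      _ = ‖γ‖ + n := by simp
    have hpos : (0 : ℝ) < (n : ℝ) + 1 := by positivity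
    have expand : r * (1 + 1 / ((n : ℝ) + 1)) * (1 + (‖γ‖ + 1) * (1 / ((n : ℝ) + 1))) *
        (((n : ℝ) + 1) * ‖binCoef γ n‖ * r ^ n)
        = (((n : ℝ) + 1) + 1) * (‖binCoef γ n‖ * ((((n : ℝ) + 1) + ‖γ‖ + 1) / ((n : ℝ) + 1)))
          * (r * r ^ n) := by
      field_simp
      ring
    push_cast
    rw [expand]
    have : ‖binCoef γ n‖ * ‖γ + (n : ℂ)‖ / ((n : ℝ) + 1) ≤
        ‖binCoef γ n‖ * ((((n : ℝ) + 1) + ‖γ‖ + 1) / ((n : ℝ) + 1)) := by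
      rw [mul_div_assoc]
      gcongr
      linarith
    have hrn : (0:ℝ) ≤ r * r ^ n := by positivity
    calc (((n : ℝ) + 1) + 1) * (‖binCoef γ n‖ * ‖γ + (n : ℂ)‖ / ((n : ℝ) + 1)) * (r ^ (n+1))
        = (((n : ℝ) + 1) + 1) * (‖binCoef γ n‖ * ‖γ + (n : ℂ)‖ / ((n : ℝ) + 1)) * (r * r ^ n) := by ring
      _ ≤ (((n : ℝ) + 1) + 1) * (‖binCoef γ n‖ * ((((n : ℝ) + 1) + ‖γ‖ + 1) / ((n : ℝ) + 1))) * (r * r ^ n) := by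
          apply mul_le_mul_of_nonneg_right _ hrn
          apply mul_le_mul_of_nonneg_left this (by positivity)
  calc b (n + 1) ≤ _ * b n := key
    _ ≤ (1 + r) / 2 * b n := mul_le_mul_of_nonneg_right hn hbn

lemma summable_term (γ : ℂ) {w : ℂ} (hw : ‖w‖ < 1) :
    Summable fun n : ℕ => binCoef γ n * w ^ n := by
  apply Summable.of_norm_bounded (summable_master γ (norm_nonneg w) hw)
  intro n
  rw [norm_mul, norm_pow]
  have h1 : (1:ℝ) ≤ (n:ℝ) + 1 := by simp
  nlinarith [mul_nonneg (sub_nonneg.mpr h1)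
    (mul_nonneg (norm_nonneg (binCoef γ n)) (pow_nonneg (norm_nonneg w) n))]

noncomputable def binSum (γ w : ℂ) : ℂ := ∑' n : ℕ, binCoef γ n * w ^ n

lemma deriv_bound (γ : ℂ) {ρ : ℝ} (hρ : 0 < ρ) {y : ℂ} (hy : ‖y‖ ≤ ρ) (n : ℕ) :
    ‖binCoef γ n * ((n : ℂ) * y ^ (n - 1))‖ ≤
      ρ⁻¹ * (((n : ℝ) + 1) * ‖binCoef γ n‖ * ρ ^ n) := by
  rw [norm_mul, norm_mul, norm_pow]
  match n with
  | 0 => simp; positivity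
  | (m+1) =>
    have h1 : ‖y‖ ^ (m + 1 - 1) ≤ ρ ^ m := by
      simpa using pow_le_pow_left₀ (norm_nonneg y) hy m
    have h2 : ‖((m : ℂ) + 1)‖ = (m : ℝ) + 1 := by
      rw [show ((m : ℂ) + 1) = ((m + 1 : ℕ) : ℂ) by push_cast; ring, Complex.norm_natCast]
      push_cast; ring
    push_cast
    rw [h2]
    have expand : ρ⁻¹ * (((m : ℝ) + 1 + 1) * ‖binCoef γ m.succ‖ * ρ ^ (m + 1))
        = ((m : ℝ) + 1 + 1) * ‖binCoef γ m.succ‖ * ρ ^ m := by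
      rw [pow_succ]
      field_simp
    rw [show ((m:ℕ) + 1 : ℕ) = m.succ from rfl] at *
    rw [expand]
    calc ‖binCoef γ m.succ‖ * (((m : ℝ) + 1) * ‖y‖ ^ (m + 1 - 1))
        ≤ ‖binCoef γ m.succ‖ * (((m : ℝ) + 1) * ρ ^ m) := by
          apply mul_le_mul_of_nonneg_left _ (norm_nonneg _)
          exact mul_le_mul_of_nonneg_left h1 (by positivity)
      _ ≤ ((m : ℝ) + 1 + 1) * ‖binCoef γ m.succ‖ * ρ ^ m := by
          have := norm_nonneg (binCoef γ m.succ)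
          have := pow_nonneg hρ.le m
          nlinarith

lemma hasDerivAt_binSum (γ : ℂ) {w : ℂ} (hw : ‖w‖ < 1) :
    HasDerivAt (binSum γ) (∑' n : ℕ, binCoef γ n * ((n : ℂ) * w ^ (n - 1))) w := by
  set ρ : ℝ := (1 + ‖w‖) / 2 with hρdef
  have hρ0 : 0 < ρ := by positivity
  have hρ1 : ρ < 1 := by rw [hρdef]; linarith
  have hu : Summable (fun n : ℕ => ρ⁻¹ * (((n : ℝ) + 1) * ‖binCoef γ n‖ * ρ ^ n)) :=
    (summable_master γ hρ0.le hρ1).mul_left _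
  apply hasDerivAt_tsum_of_isPreconnected hu (Metric.isOpen_ball (x := (0:ℂ)) (ε := ρ))
    (convex_ball (0:ℂ) ρ).isPreconnected
    (g := fun n z => binCoef γ n * z ^ n)
    (g' := fun n z => binCoef γ n * ((n : ℂ) * z ^ (n - 1)))
    (y₀ := 0)
  · intro n y _
    exact (hasDerivAt_pow n y).const_mul _
  · intro n y hy
    rw [Metric.mem_ball, dist_zero_right] at hy
    exact deriv_bound γ hρ0 hy.le n
  · simpa [Metric.mem_ball] using hρ0
  · apply summable_of_ne_finset_zero (s := {0})
    intro n hn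
    simp only [Finset.mem_singleton] at hn
    simp [zero_pow hn]
  · simpa [Metric.mem_ball, dist_zero_right] using (by linarith : ‖w‖ < ρ)

lemma summable_derivTerm (γ : ℂ) {w : ℂ} (hw : ‖w‖ < 1) :
    Summable (fun n : ℕ => binCoef γ n * ((n : ℂ) * w ^ (n - 1))) := by
  set ρ : ℝ := (1 + ‖w‖) / 2 with hρdef
  have hρ0 : 0 < ρ := by positivity
  have hρ1 : ρ < 1 := by rw [hρdef]; linarith
  apply Summable.of_norm_bounded ((summable_master γ hρ0.le hρ1).mul_left ρ⁻¹)
  exact deriv_bound γ hρ0 (by rw [hρdef]; linarith)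

lemma deriv_identity (γ : ℂ) {w : ℂ} (hw : ‖w‖ < 1) :
    (1 - w) * (∑' n : ℕ, binCoef γ n * ((n : ℂ) * w ^ (n - 1))) = γ * binSum γ w := by
  set c : ℕ → ℂ := fun n => binCoef γ n * ((n : ℂ) * w ^ (n - 1)) with hcdef
  have hc : Summable c := summable_derivTerm γ hw
  have hcs : ∀ n : ℕ, c (n + 1) = (γ + n) * (binCoef γ n * w ^ n) := by
    intro n
    have h1 : ((n : ℂ) + 1) ≠ 0 := by exact_mod_cast Nat.cast_add_one_ne_zero (R := ℂ) n
    rw [hcdef]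
    simp only
    rw [binCoef_succ]
    push_cast
    field_simp
  have hwc : ∀ n : ℕ, w * c n = (n : ℂ) * (binCoef γ n * w ^ n) := by
    intro n
    match n with
    | 0 => simp [hcdef]
    | (m+1) =>
      rw [hcdef]
      simp only
      push_cast
      rw [pow_succ]
      ring
  have hA : Summable (fun n : ℕ => (γ + n) * (binCoef γ n * w ^ n)) := by
    rw [← summable_congr hcs]
    exact (summable_nat_add_iff 1).mpr hc
  have hB : Summable (fun n : ℕ => (n : ℂ) * (binCoef γ n * w ^ n)) := by
    rw [← summable_congr hwc]
    exact hc.mul_left w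
  have step1 : ∑' n, c n = ∑' n : ℕ, (γ + n) * (binCoef γ n * w ^ n) := by
    rw [hc.tsum_eq_zero_add]
    have : c 0 = 0 := by simp [hcdef]
    rw [this, zero_add]
    exact tsum_congr hcs
  have step2 : w * ∑' n, c n = ∑' n : ℕ, (n : ℂ) * (binCoef γ n * w ^ n) := by
    rw [← tsum_mul_left]
    exact tsum_congr hwc
  calc (1 - w) * ∑' n, c n = (∑' n, c n) - w * ∑' n, c n := by ring
    _ = (∑' n : ℕ, (γ + n) * (binCoef γ n * w ^ n)) -
        ∑' n : ℕ, (n : ℂ) * (binCoef γ n * w ^ n) := by rw [step2, step1]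
    _ = ∑' n : ℕ, ((γ + n) * (binCoef γ n * w ^ n) - (n : ℂ) * (binCoef γ n * w ^ n)) :=
        (hA.tsum_sub hB).symm
    _ = ∑' n : ℕ, γ * (binCoef γ n * w ^ n) := by
        apply tsum_congr; intro n; ring
    _ = γ * binSum γ w := by rw [tsum_mul_left]; rfl

lemma binomial_tsum (γ : ℂ) {w : ℂ} (hw : ‖w‖ < 1) :
    (∑' n : ℕ, binCoef γ n * w ^ n) = (1 - w) ^ (-γ) := by
  have hmem : ∀ z : ℂ, ‖z‖ < 1 → (1 - z) ∈ Complex.slitPlane := by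
    intro z hz
    rw [Complex.mem_slitPlane_iff]
    left
    have := Complex.abs_re_le_norm z
    simp only [Complex.sub_re, Complex.one_re]
    cases abs_le.mp this with
    | intro h1 h2 => linarith
  have hne : ∀ z : ℂ, ‖z‖ < 1 → (1 - z) ≠ 0 := by
    intro z hz
    exact Complex.slitPlane_ne_zero (hmem z hz)
  set h : ℂ → ℂ := fun z => (1 - z) ^ γ * binSum γ z with hhdef
  have hderiv : ∀ z ∈ Metric.ball (0:ℂ) 1, HasDerivWithinAt h 0 (Metric.ball (0:ℂ) 1) z := by
    intro z hz
    rw [Metric.mem_ball, dist_zero_right] at hz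
    have d1 : HasDerivAt (fun z : ℂ => (1 - z) ^ γ) (γ * (1 - z) ^ (γ - 1) * (0 - 1)) z :=
      HasDerivAt.cpow_const ((hasDerivAt_const z (1:ℂ)).sub (hasDerivAt_id z)) (hmem z hz)
    have d2 := hasDerivAt_binSum γ hz
    have d3 := d1.mul d2
    have key : γ * (1 - z) ^ (γ - 1) * (0 - 1) * binSum γ z +
        (1 - z) ^ γ * (∑' n : ℕ, binCoef γ n * ((n : ℂ) * z ^ (n - 1))) = 0 := by
      have hsplit : (1 - z) ^ γ = (1 - z) ^ (γ - 1) * (1 - z) := by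
        conv_lhs => rw [show γ = (γ - 1) + 1 by ring]
        rw [Complex.cpow_add _ _ (hne z hz), Complex.cpow_one]
      rw [hsplit, mul_assoc ((1 - z) ^ (γ - 1)), deriv_identity γ hz]
      ring
    rw [key] at d3
    exact d3.hasDerivWithinAt
  have hconst : h w = h 0 := by
    have hb := Convex.norm_image_sub_le_of_norm_hasDerivWithin_le (C := 0)
      hderiv (fun x _ => by simp) (convex_ball (0:ℂ) 1)
      (Metric.mem_ball_self (by norm_num : (0:ℝ) < 1))
      (by simpa [Metric.mem_ball, dist_zero_right] using hw)
    rw [zero_mul] at hb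
    exact sub_eq_zero.mp (norm_le_zero_iff.mp hb)
  have h0 : h 0 = 1 := by
    rw [hhdef]
    simp only
    have hb0 : binSum γ 0 = 1 := by
      rw [binSum, tsum_eq_single 0 (by intro n hn; simp [zero_pow hn])]
      simp [binCoef_zero]
    rw [hb0, sub_zero, Complex.one_cpow, mul_one]
  have hmul : (1 - w) ^ γ * (∑' n : ℕ, binCoef γ n * w ^ n) = 1 := by
    have := hconst.trans h0
    simpa [hhdef, binSum] using this
  rw [Complex.cpow_neg]
  exact eq_inv_of_mul_eq_one_left (by rw [mul_comm]; exact hmul)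

lemma ofReal_mul_cpow' {X : ℝ} (hX : 0 < X) {u : ℂ} (hu : u ≠ 0) (c : ℂ) :
    ((X : ℂ) * u) ^ c = (X : ℂ) ^ c * u ^ c := by
  have hX' : (X : ℂ) ≠ 0 := by exact_mod_cast hX.ne'
  rw [Complex.cpow_def_of_ne_zero (mul_ne_zero hX' hu),
    Complex.log_ofReal_mul hX hu, add_mul, Complex.exp_add,
    Complex.cpow_def_of_ne_zero hX', Complex.cpow_def_of_ne_zero hu,
    Complex.ofReal_log hX.le]

lemma cpow_sα {α : ℝ} {s : ℝ} (hs : 0 < s) (γ : ℂ) :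
    (s : ℂ) ^ ((α : ℂ) * γ) = (((s ^ α : ℝ) : ℂ)) ^ γ := by
  have him : (Complex.log ↑s * (α : ℂ)).im = 0 := by
    simp [Complex.mul_im, Complex.log_im, Complex.arg_ofReal_of_nonneg hs.le]
  rw [Complex.ofReal_cpow hs.le]
  exact Complex.cpow_mul γ (by rw [him]; linarith [Real.pi_pos])
    (by rw [him]; linarith [Real.pi_pos])

lemma closed_form_eq (α β : ℝ) (γ z : ℂ)
    (s : ℝ) (hs : 0 < s) (hsz : ‖z‖ < s ^ α) :
    (s : ℂ) ^ ((α : ℂ) * γ - β) * (((s ^ α : ℝ) : ℂ) - z) ^ (-γ) =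
      (s : ℂ) ^ (-(β : ℂ)) * (1 - z * (s : ℂ) ^ (-(α : ℂ))) ^ (-γ) := by
  have hXpos : (0:ℝ) < s ^ α := Real.rpow_pos_of_pos hs α
  have hsc : ((s ^ (-α) : ℝ) : ℂ) = (s : ℂ) ^ (-(α : ℂ)) := by
    rw [Complex.ofReal_cpow hs.le]; norm_cast
  set u : ℂ := 1 - z * (s : ℂ) ^ (-(α : ℂ)) with hu
  have hwnorm : ‖z * (s : ℂ) ^ (-(α : ℂ))‖ < 1 := by
    rw [← hsc, norm_mul, Complex.norm_real, Real.norm_eq_abs,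
      abs_of_pos (Real.rpow_pos_of_pos hs _), Real.rpow_neg hs.le]
    calc ‖z‖ * (s ^ α)⁻¹ < s ^ α * (s ^ α)⁻¹ :=
          mul_lt_mul_of_pos_right hsz (inv_pos.mpr hXpos)
      _ = 1 := mul_inv_cancel₀ hXpos.ne'
  have hune : u ≠ 0 := by
    intro hc
    rw [hu] at hc
    have h1 : (1 : ℂ) = z * (s : ℂ) ^ (-(α : ℂ)) := sub_eq_zero.mp hc
    rw [← h1] at hwnorm
    simp at hwnorm
  have hmulsa : s ^ α * s ^ (-α) = 1 := by
    rw [← Real.rpow_add hs]; simp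
  have hfactor : (((s ^ α : ℝ) : ℂ)) - z = ((s ^ α : ℝ) : ℂ) * u := by
    rw [hu, mul_sub, mul_one, ← hsc]
    congr 1
    rw [show ((s ^ α : ℝ) : ℂ) * (z * ((s ^ (-α) : ℝ) : ℂ))
        = z * (((s ^ α * s ^ (-α) : ℝ)) : ℂ) by push_cast; ring, hmulsa]
    simp
  have hXne : (((s ^ α : ℝ) : ℂ)) ≠ 0 := by exact_mod_cast hXpos.ne'
  rw [hfactor, ofReal_mul_cpow' hXpos hune, Complex.cpow_sub _ _ (by exact_mod_cast hs.ne'),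
    cpow_sα hs γ]
  have hXγ : (((s ^ α : ℝ) : ℂ)) ^ γ ≠ 0 := by
    rw [Ne, Complex.cpow_eq_zero_iff]
    tauto
  simp only [Complex.cpow_neg]
  rw [show ((s ^ α : ℝ) : ℂ) ^ γ / (s : ℂ) ^ (β : ℂ) *
      ((((s ^ α : ℝ) : ℂ) ^ γ)⁻¹ * (u ^ γ)⁻¹)
      = (((s ^ α : ℝ) : ℂ) ^ γ * (((s ^ α : ℝ) : ℂ) ^ γ)⁻¹) *
        (((s : ℂ) ^ (β : ℂ))⁻¹ * (u ^ γ)⁻¹) by ring,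
    mul_inv_cancel₀ hXγ, one_mul]

open MeasureTheory

theorem prabhakar_laplace (α β : ℝ) (hα : 0 < α) (hβ : 0 < β) (γ z : ℂ)
    (s : ℝ) (hs : 0 < s) (hsz : ‖z‖ < s ^ α) :
    (∫ t in Set.Ioi (0:ℝ),
        Complex.exp (-(s : ℂ) * t) * ((t ^ (β - 1) : ℝ) : ℂ) *
          prabhakar α β γ (((t ^ α : ℝ) : ℂ) * z)) =
      (s : ℂ) ^ ((α : ℂ) * γ - β) * (((s ^ α : ℝ) : ℂ) - z) ^ (-γ)
    ∧ (s : ℂ) ^ ((α : ℂ) * γ - β) * (((s ^ α : ℝ) : ℂ) - z) ^ (-γ) =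
      (s : ℂ) ^ (-(β : ℂ)) * (1 - z * (s : ℂ) ^ (-(α : ℂ))) ^ (-γ) := by
  have hcf := closed_form_eq α β γ z s hs hsz
  refine ⟨?_, hcf⟩
  rw [hcf]
  -- setup
  have hXpos : (0:ℝ) < s ^ α := Real.rpow_pos_of_pos hs α
  have hsc : ((s ^ (-α) : ℝ) : ℂ) = (s : ℂ) ^ (-(α : ℂ)) := by
    rw [Complex.ofReal_cpow hs.le]; norm_cast
  set w : ℂ := z * (s : ℂ) ^ (-(α : ℂ)) with hwdef
  have hw : ‖w‖ < 1 := by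
    rw [hwdef, ← hsc, norm_mul, Complex.norm_real, Real.norm_eq_abs,
      abs_of_pos (Real.rpow_pos_of_pos hs _), Real.rpow_neg hs.le]
    calc ‖z‖ * (s ^ α)⁻¹ < s ^ α * (s ^ α)⁻¹ :=
          mul_lt_mul_of_pos_right hsz (inv_pos.mpr hXpos)
      _ = 1 := mul_inv_cancel₀ hXpos.ne'
  -- the summand functions
  set F : ℕ → ℝ → ℂ := fun k t =>
    Complex.exp (-(s : ℂ) * t) * ((t ^ (β - 1) : ℝ) : ℂ) *
      ((ascPochhammer ℂ k).eval γ * ((((t ^ α : ℝ) : ℂ) * z) ^ k) /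
        ((k.factorial : ℂ) * Complex.Gamma ((α : ℂ) * k + (β : ℂ)))) with hF
  set g : ℕ → ℝ → ℝ := fun k t => t ^ (α * k + β - 1) * Real.exp (-(s * t)) with hg
  set C : ℕ → ℂ := fun k => (ascPochhammer ℂ k).eval γ * z ^ k /
    ((k.factorial : ℂ) * ((Real.Gamma (α * k + β) : ℝ) : ℂ)) with hC
  have hak : ∀ k : ℕ, (0:ℝ) < α * k + β := fun k => by positivity
  have hΓpos : ∀ k : ℕ, (0:ℝ) < Real.Gamma (α * k + β) :=
    fun k => Real.Gamma_pos_of_pos (hak k)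
  -- pointwise identification of F with C • g on Ioi 0
  have hFg : ∀ k : ℕ, ∀ t ∈ Set.Ioi (0:ℝ), F k t = C k * ((g k t : ℝ) : ℂ) := by
    intro k t ht
    rw [Set.mem_Ioi] at ht
    have hGa : Complex.Gamma ((α : ℂ) * k + (β : ℂ)) = ((Real.Gamma (α * k + β) : ℝ) : ℂ) := by
      rw [show ((α : ℂ) * k + (β : ℂ)) = (((α * k + β : ℝ)) : ℂ) by push_cast; ring,
        Complex.Gamma_ofReal]
    have hexp : Complex.exp (-(s : ℂ) * t) = ((Real.exp (-(s * t)) : ℝ) : ℂ) := by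
      rw [Complex.ofReal_exp]
      congr 1
      push_cast
      ring
    have hpow : ((t ^ α : ℝ) : ℂ) ^ k = (((t ^ (α * k) : ℝ)) : ℂ) := by
      rw [← Complex.ofReal_pow]
      congr 1
      rw [← Real.rpow_natCast (t ^ α) k, ← Real.rpow_mul ht.le]
    have hcomb : (t ^ (β - 1) : ℝ) * t ^ (α * k) = t ^ (α * k + β - 1) := by
      rw [← Real.rpow_add ht]
      ring_nf
    rw [hF, hC, hg]
    simp only
    rw [hGa, hexp, mul_pow, hpow, ← hcomb]
    have hΓne : ((Real.Gamma (α * k + β) : ℝ) : ℂ) ≠ 0 := by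
      exact_mod_cast (hΓpos k).ne'
    have hkne : ((k.factorial : ℕ) : ℂ) ≠ 0 := by
      exact_mod_cast k.factorial_ne_zero
    push_cast
    ring
  -- integrability of g
  have hg_int : ∀ k : ℕ, IntegrableOn (g k) (Set.Ioi 0) := by
    intro k
    have h := integrableOn_rpow_mul_exp_neg_mul_rpow
      (by linarith [hak k] : (-1:ℝ) < α * k + β - 1) (by norm_num : (0:ℝ) < 1) hs
    simpa [Real.rpow_one, neg_mul, hg] using h
  have hg_val : ∀ k : ℕ, ∫ t in Set.Ioi (0:ℝ), g k t
      = (1 / s) ^ (α * k + β) * Real.Gamma (α * k + β) := by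
    intro k
    exact Real.integral_rpow_mul_exp_neg_mul_Ioi (hak k) hs
  -- integrability of F
  have hF_int : ∀ k : ℕ, Integrable (F k) (volume.restrict (Set.Ioi (0:ℝ))) := by
    intro k
    have h1 : Integrable (fun t => C k * ((g k t : ℝ) : ℂ))
        (volume.restrict (Set.Ioi (0:ℝ))) :=
      ((hg_int k).ofReal (𝕜 := ℂ)).const_mul _
    apply h1.congr
    filter_upwards [self_mem_ae_restrict measurableSet_Ioi] with t ht
    exact (hFg k t ht).symm
  -- norm integrals
  have hF_norm : ∀ k : ℕ, ∫ t in Set.Ioi (0:ℝ), ‖F k t‖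
      = ‖C k‖ * ((1 / s) ^ (α * k + β) * Real.Gamma (α * k + β)) := by
    intro k
    rw [← hg_val k, ← integral_const_mul]
    apply setIntegral_congr_fun measurableSet_Ioi
    intro t ht
    dsimp only
    have ht' : (0:ℝ) < t := ht
    have hgpos : (0:ℝ) ≤ g k t := by
      rw [hg]; dsimp only; positivity
    rw [hFg k t ht, norm_mul]
    congr 1
    rw [Complex.norm_real, Real.norm_eq_abs, _root_.abs_of_nonneg hgpos]
  -- summability of the norm integrals
  have hr0 : (0:ℝ) ≤ ‖w‖ := norm_nonneg w
  have hrs : ∀ k : ℕ, (1 / s) ^ (α * k + β) = s ^ (-β) * (s ^ (-α)) ^ k := by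
    intro k
    rw [one_div, ← Real.rpow_neg_one s, ← Real.rpow_natCast (s ^ (-α)) k,
      ← Real.rpow_mul hs.le, ← Real.rpow_mul hs.le, ← Real.rpow_add hs]
    congr 1
    ring
  have hnormC : ∀ k : ℕ, ‖C k‖ = ‖binCoef γ k‖ * ‖z‖ ^ k / Real.Gamma (α * k + β) := by
    intro k
    rw [hC]
    simp only
    rw [norm_div, norm_mul, norm_mul, norm_pow, Complex.norm_natCast,
      Complex.norm_real, Real.norm_eq_abs, abs_of_pos (hΓpos k), binCoef, norm_div,
      Complex.norm_natCast]
    field_simp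
  have hterm : ∀ k : ℕ, ‖C k‖ * ((1 / s) ^ (α * k + β) * Real.Gamma (α * k + β))
      = s ^ (-β) * (‖binCoef γ k‖ * ‖w‖ ^ k) := by
    intro k
    rw [hnormC k, hrs k]
    have hwk : ‖w‖ = ‖z‖ * s ^ (-α) := by
      rw [hwdef, ← hsc, norm_mul, Complex.norm_real, Real.norm_eq_abs,
        abs_of_pos (Real.rpow_pos_of_pos hs _)]
    rw [hwk, mul_pow]
    field_simp
  have hF_sum : Summable fun k : ℕ => ∫ t in Set.Ioi (0:ℝ), ‖F k t‖ := by
    rw [summable_congr (fun k => (hF_norm k).trans (hterm k))]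
    apply Summable.mul_left
    apply Summable.of_nonneg_of_le (fun k => by positivity)
      (fun k => ?_) (summable_master γ hr0 hw)
    have h1 : (1:ℝ) ≤ (k:ℝ) + 1 := by simp
    nlinarith [mul_nonneg (sub_nonneg.mpr h1)
      (mul_nonneg (norm_nonneg (binCoef γ k)) (pow_nonneg hr0 k))]
  -- swap integral and sum
  have hswap : (∫ t in Set.Ioi (0:ℝ),
      Complex.exp (-(s : ℂ) * t) * ((t ^ (β - 1) : ℝ) : ℂ) *
        prabhakar α β γ (((t ^ α : ℝ) : ℂ) * z))
      = ∑' k : ℕ, ∫ t in Set.Ioi (0:ℝ), F k t := by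
    rw [integral_tsum_of_summable_integral_norm hF_int hF_sum]
    apply setIntegral_congr_fun measurableSet_Ioi
    intro t _
    dsimp only
    rw [prabhakar, hF]
    exact (tsum_mul_left).symm
  have hFval : ∀ k : ℕ, ∫ t in Set.Ioi (0:ℝ), F k t
      = C k * (((1 / s) ^ (α * k + β) * Real.Gamma (α * k + β) : ℝ) : ℂ) := by
    intro k
    rw [← hg_val k]
    rw [setIntegral_congr_fun measurableSet_Ioi (hFg k), integral_const_mul]
    congr 1
    exact integral_ofReal
  have htermC : ∀ k : ℕ, C k * (((1 / s) ^ (α * k + β) * Real.Gamma (α * k + β) : ℝ) : ℂ)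
      = ((s ^ (-β) : ℝ) : ℂ) * (binCoef γ k * w ^ k) := by
    intro k
    have hΓne : ((Real.Gamma (α * k + β) : ℝ) : ℂ) ≠ 0 := by
      exact_mod_cast (hΓpos k).ne'
    have hkne : ((k.factorial : ℕ) : ℂ) ≠ 0 := by
      exact_mod_cast k.factorial_ne_zero
    rw [hC, binCoef, hrs k]
    simp only
    have hwk : w ^ k = z ^ k * (((s ^ (-α) : ℝ) : ℂ)) ^ k := by
      rw [hwdef, ← hsc, mul_pow]
    rw [hwk]
    push_cast
    field_simp
  rw [hswap]
  calc ∑' k : ℕ, ∫ t in Set.Ioi (0:ℝ), F k t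
      = ∑' k : ℕ, ((s ^ (-β) : ℝ) : ℂ) * (binCoef γ k * w ^ k) :=
        tsum_congr fun k => (hFval k).trans (htermC k)
    _ = ((s ^ (-β) : ℝ) : ℂ) * ∑' k : ℕ, binCoef γ k * w ^ k := tsum_mul_left
    _ = (s : ℂ) ^ (-(β : ℂ)) * (1 - w) ^ (-γ) := by
        rw [binomial_tsum γ hw, Complex.ofReal_cpow hs.le]
        norm_cast
end

section
/- Riemann–Liouville fractional integral of the Prabhakar kernel: for real α, β, ρ > 0, γ, λ ∈ ℂ and t > 0, (1/Γ(ρ)) ∫_0^t (t−u)^{ρ−1} u^{β−1} E_{α,β}^γ(λ u^α) du = t^{β+ρ−1} E_{α,β+ρ}^γ(λ t^α). -/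
open scoped Real
open Complex Filter
open MeasureTheory Set Topology

lemma gamma_ratio_le {a x : ℝ} (ha : 0 < a) (hx : 1 < x) :
    Real.Gamma x ≤ (x - 1) ^ (-a) * Real.Gamma (x + a) := by
  have hx0 : 0 < x := by linarith
  have hx1 : 0 < x - 1 := by linarith
  have hGx : 0 < Real.Gamma x := Real.Gamma_pos_of_pos hx0
  have hGx1 : 0 < Real.Gamma (x - 1) := Real.Gamma_pos_of_pos hx1
  have hGxa : 0 < Real.Gamma (x + a) := Real.Gamma_pos_of_pos (by linarith)
  have hslope := Real.convexOn_log_Gamma.slope_mono_adjacent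
    (Set.mem_Ioi.2 hx1) (Set.mem_Ioi.2 (show (0:ℝ) < x + a by linarith))
    (show x - 1 < x by linarith) (show x < x + a by linarith)
  simp only [Function.comp] at hslope
  have hfe : Real.Gamma x = (x - 1) * Real.Gamma (x - 1) := by
    have := Real.Gamma_add_one hx1.ne'
    rw [sub_add_cancel] at this; exact this
  have hd1 : x - (x - 1) = 1 := by ring
  have hd2 : x + a - x = a := by ring
  rw [hd1, hd2, div_one, hfe, Real.log_mul hx1.ne' hGx1.ne', add_sub_cancel_right] at hslope
  -- hslope : log (x-1) ≤ (log Γ(x+a) - (log (x-1) + log Γ(x-1))) / a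
  rw [le_div_iff₀ ha] at hslope
  -- Γ x * (x-1)^a ≤ Γ (x+a)
  have key : Real.Gamma x * (x - 1) ^ a ≤ Real.Gamma (x + a) := by
    have h1 : Real.Gamma x * (x - 1) ^ a
        = Real.exp (Real.log (x - 1) + Real.log (Real.Gamma (x - 1)) + Real.log (x - 1) * a) := by
      rw [Real.exp_add, Real.exp_add, Real.exp_log hx1, Real.exp_log hGx1,
        Real.rpow_def_of_pos hx1, hfe]
    have h2 : Real.Gamma (x + a) = Real.exp (Real.log (Real.Gamma (x + a))) :=
      (Real.exp_log hGxa).symm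
    rw [h1, h2]
    exact Real.exp_le_exp.2 (by linarith)
  rw [Real.rpow_neg hx1.le, inv_mul_eq_div, le_div_iff₀ (Real.rpow_pos_of_pos hx1 a)]
  exact key

lemma summable_pow_div_gamma {a b : ℝ} (ha : 0 < a) (hb : 0 < b) {R : ℝ} (hR : 0 ≤ R) :
    Summable (fun k : ℕ => R ^ k / Real.Gamma (a * k + b)) := by
  rcases hR.eq_or_lt with h | hRpos
  · apply summable_of_ne_finset_zero (s := {0})
    intro k hk
    simp only [Finset.mem_singleton] at hk
    simp [← h, zero_pow hk]
  · have hpos : ∀ k : ℕ, 0 < a * k + b := fun k => by positivity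
    have hx : Tendsto (fun k : ℕ => a * k + b) atTop atTop := by
      apply tendsto_atTop_add_const_right
      exact Tendsto.const_mul_atTop ha tendsto_natCast_atTop_atTop
    apply summable_of_ratio_test_tendsto_lt_one (l := 0) one_pos ?_ ?_
    · filter_upwards with k
      exact div_ne_zero (pow_ne_zero _ hRpos.ne') (Real.Gamma_pos_of_pos (hpos k)).ne'
    · have hbd : ∀ᶠ k : ℕ in atTop, ‖R ^ (k+1) / Real.Gamma (a * ((k+1:ℕ):ℝ) + b)‖ /
          ‖R ^ k / Real.Gamma (a * k + b)‖ ≤ R * (a * k + b - 1) ^ (-a) := by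
        filter_upwards [hx.eventually_ge_atTop 2] with k hk2
        have h1 : (1:ℝ) < a * k + b := by linarith
        have hG1 : 0 < Real.Gamma (a * k + b) := Real.Gamma_pos_of_pos (hpos k)
        have hG2 : 0 < Real.Gamma (a * ((k+1:ℕ):ℝ) + b) := Real.Gamma_pos_of_pos (hpos (k+1))
        have he : a * ((k+1:ℕ):ℝ) + b = (a * k + b) + a := by push_cast; ring
        have hrat := gamma_ratio_le ha h1
        rw [← he] at hrat
        rw [Real.norm_eq_abs, Real.norm_eq_abs,
          abs_of_pos (div_pos (pow_pos hRpos _) hG2),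
          abs_of_pos (div_pos (pow_pos hRpos _) hG1)]
        have heq : R ^ (k+1) / Real.Gamma (a * ((k+1:ℕ):ℝ) + b) / (R ^ k / Real.Gamma (a * k + b))
            = R * (Real.Gamma (a * k + b) / Real.Gamma (a * ((k+1:ℕ):ℝ) + b)) := by
          field_simp
          ring
        rw [heq]
        gcongr R * ?_
        rw [div_le_iff₀ hG2]
        exact hrat
      have hz : Tendsto (fun k : ℕ => R * (a * k + b - 1) ^ (-a)) atTop (𝓝 0) := by
        have h2 : Tendsto (fun k : ℕ => a * k + b - 1) atTop atTop :=
          tendsto_atTop_add_const_right _ _ hx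
        simpa using ((tendsto_rpow_neg_atTop ha).comp h2).const_mul R
      exact squeeze_zero' (Eventually.of_forall fun k => by positivity) hbd hz

lemma pochhammer_abs_le (γ : ℂ) (k : ℕ) :
    ‖(ascPochhammer ℂ k).eval γ‖ ≤ (‖γ‖ + 1) ^ k * k.factorial := by
  induction k with
  | zero => simp
  | succ n ih =>
    rw [ascPochhammer_succ_right]
    simp only [Polynomial.eval_mul, Polynomial.eval_add, Polynomial.eval_X,
      Polynomial.eval_natCast]
    rw [norm_mul]
    calc ‖(ascPochhammer ℂ n).eval γ‖ * ‖γ + (n:ℂ)‖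
        ≤ ((‖γ‖ + 1) ^ n * n.factorial) * ((‖γ‖ + 1) * (n + 1)) := by
          apply mul_le_mul ih ?_ (norm_nonneg _) (by positivity)
          calc ‖γ + (n:ℂ)‖ ≤ ‖γ‖ + n := by
                simpa using norm_add_le γ (n:ℂ)
            _ ≤ (‖γ‖ + 1) * (n + 1) := by nlinarith [norm_nonneg γ, Nat.cast_nonneg (α := ℝ) n]
      _ = (‖γ‖ + 1) ^ (n+1) * (n+1).factorial := by
          rw [Nat.factorial_succ]
          push_cast
          ring
lemma summable_prabhakar_aux {a b : ℝ} (ha : 0 < a) (hb : 0 < b) (γ : ℂ) {r : ℝ} (hr : 0 ≤ r) :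
    Summable (fun k : ℕ => ‖(ascPochhammer ℂ k).eval γ‖ * r ^ k /
      (k.factorial * Real.Gamma (a * k + b))) := by
  apply Summable.of_nonneg_of_le (fun k => by positivity) (fun k => ?_)
    (summable_pow_div_gamma ha hb (R := (‖γ‖ + 1) * r) (by positivity))
  have hG : 0 < Real.Gamma (a * k + b) := Real.Gamma_pos_of_pos (by positivity)
  have hfac : (0:ℝ) < k.factorial := by positivity
  rw [div_le_div_iff₀ (by positivity) hG, mul_pow]
  calc ‖(ascPochhammer ℂ k).eval γ‖ * r ^ k * Real.Gamma (a * k + b)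
      ≤ ((‖γ‖ + 1) ^ k * k.factorial) * r ^ k * Real.Gamma (a * k + b) := by
        gcongr
        exact pochhammer_abs_le γ k
    _ = (‖γ‖ + 1) ^ k * r ^ k * (k.factorial * Real.Gamma (a * k + b)) := by ring

lemma betaKernel_integrable_left {p q t : ℝ} (hp : 0 < p) (hq : 0 < q) (ht : 0 < t) :
    IntervalIntegrable (fun u => u ^ (q - 1) * (t - u) ^ (p - 1)) volume 0 (t/2) := by
  apply IntervalIntegrable.mul_continuousOn
  · exact intervalIntegral.intervalIntegrable_rpow' (by linarith)
  · apply ContinuousOn.rpow_const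
    · exact (continuous_const.sub continuous_id).continuousOn
    · intro x hx
      left
      rw [Set.uIcc_of_le (by linarith)] at hx
      have : x < t := lt_of_le_of_lt hx.2 (by linarith)
      exact sub_ne_zero_of_ne this.ne'

lemma betaKernel_integrable {p q t : ℝ} (hp : 0 < p) (hq : 0 < q) (ht : 0 < t) :
    IntervalIntegrable (fun u => u ^ (q - 1) * (t - u) ^ (p - 1)) volume 0 t := by
  refine (betaKernel_integrable_left hp hq ht).trans ?_
  have h := (betaKernel_integrable_left hq hp ht).comp_sub_left t
  have he : t - t/2 = t/2 := by ring
  have he0 : t - 0 = t := by ring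
  rw [he, he0] at h
  convert h.symm using 1
  funext x
  rw [sub_sub_cancel, mul_comm]

lemma betaKernel_integral {p q t : ℝ} (hp : 0 < p) (hq : 0 < q) (ht : 0 < t) :
    ∫ u in (0:ℝ)..t, u ^ (q - 1) * (t - u) ^ (p - 1)
      = t ^ (p + q - 1) * (Real.Gamma p * Real.Gamma q / Real.Gamma (p + q)) := by
  have hqc : (0:ℝ) < (q:ℂ).re := by simpa using hq
  have hpc : (0:ℝ) < (p:ℂ).re := by simpa using hp
  have hbeta := Complex.betaIntegral_scaled (q:ℂ) (p:ℂ) ht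
  have hGG := Complex.Gamma_mul_Gamma_eq_betaIntegral hqc hpc
  have hGne : Complex.Gamma ((q:ℂ) + p) ≠ 0 := by
    rw [(by push_cast; ring : ((q:ℂ) + p) = ((q + p : ℝ) : ℂ)), Complex.Gamma_ofReal]
    exact_mod_cast (Real.Gamma_pos_of_pos (by linarith)).ne'
  have hbval : Complex.betaIntegral (q:ℂ) (p:ℂ)
      = Complex.Gamma q * Complex.Gamma p / Complex.Gamma ((q:ℂ) + p) := by
    rw [eq_div_iff hGne, hGG]; ring
  -- convert the complex interval integral to the real one
  have hcongr : ∫ x in (0:ℝ)..t, ((x:ℂ)) ^ ((q:ℂ) - 1) * (((t:ℝ):ℂ) - x) ^ ((p:ℂ) - 1)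
      = ((∫ u in (0:ℝ)..t, u ^ (q - 1) * (t - u) ^ (p - 1) : ℝ) : ℂ) := by
    rw [← intervalIntegral.integral_ofReal]
    apply intervalIntegral.integral_congr
    intro x hx
    rw [Set.uIcc_of_le ht.le] at hx
    simp only [Complex.ofReal_mul]
    rw [Complex.ofReal_cpow hx.1 (q-1), Complex.ofReal_cpow (by linarith [hx.2] : (0:ℝ) ≤ t - x) (p-1)]
    push_cast
    ring
  rw [hcongr, hbval] at hbeta
  have htc : ((t:ℂ)) ^ ((q:ℂ) + p - 1) = ((t ^ (p + q - 1) : ℝ) : ℂ) := by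
    rw [Complex.ofReal_cpow ht.le]
    push_cast
    ring_nf
  rw [htc] at hbeta
  have := hbeta
  rw [show Complex.Gamma (q:ℂ) = ((Real.Gamma q : ℝ) : ℂ) from Complex.Gamma_ofReal q,
    show Complex.Gamma (p:ℂ) = ((Real.Gamma p : ℝ) : ℂ) from Complex.Gamma_ofReal p,
    show Complex.Gamma ((q:ℂ) + p) = ((Real.Gamma (p + q) : ℝ) : ℂ) by
      rw [(by push_cast; ring : ((q:ℂ) + p) = ((q + p : ℝ) : ℂ)), Complex.Gamma_ofReal, add_comm]] at this
  have h2 : ((∫ u in (0:ℝ)..t, u ^ (q - 1) * (t - u) ^ (p - 1) : ℝ) : ℂ)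
      = ((t ^ (p + q - 1) * (Real.Gamma p * Real.Gamma q / Real.Gamma (p + q)) : ℝ) : ℂ) := by
    rw [this]
    push_cast
    ring
  exact_mod_cast h2

theorem prabhakar_RL_integral (α β ρ : ℝ) (hα : 0 < α) (hβ : 0 < β) (hρ : 0 < ρ)
    (γ lam : ℂ) (t : ℝ) (ht : 0 < t) :
    (1 / (Real.Gamma ρ : ℂ)) *
        ∫ u in (0:ℝ)..t,
          (((t - u) ^ (ρ - 1) : ℝ) : ℂ) * ((u ^ (β - 1) : ℝ) : ℂ) *
            prabhakar α β γ (lam * ((u ^ α : ℝ) : ℂ)) =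
      ((t ^ (β + ρ - 1) : ℝ) : ℂ) * prabhakar α (β + ρ) γ (lam * ((t ^ α : ℝ) : ℂ)) := by
  have hΓρ : (0:ℝ) < Real.Gamma ρ := Real.Gamma_pos_of_pos hρ
  set c : ℕ → ℂ := fun k => (ascPochhammer ℂ k).eval γ * lam ^ k /
    ((Nat.factorial k : ℂ) * ((Real.Gamma (α * k + β) : ℝ) : ℂ)) with hc
  set F : ℕ → ℝ → ℂ :=
    fun k u => c k * ((u ^ (α * k + β - 1) * (t - u) ^ (ρ - 1) : ℝ) : ℂ) with hF
  have hq : ∀ k : ℕ, (0:ℝ) < α * k + β := fun k => by positivity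
  have hΓq : ∀ k : ℕ, (0:ℝ) < Real.Gamma (α * k + β) :=
    fun k => Real.Gamma_pos_of_pos (hq k)
  have hΓqρ : ∀ k : ℕ, (0:ℝ) < Real.Gamma (ρ + (α * k + β)) :=
    fun k => Real.Gamma_pos_of_pos (by have := hq k; linarith)
  set V : ℕ → ℝ := fun k => t ^ (ρ + (α * k + β) - 1) *
    (Real.Gamma ρ * Real.Gamma (α * k + β) / Real.Gamma (ρ + (α * k + β))) with hV
  have hint : ∀ k : ℕ,
      IntegrableOn (fun u => u ^ (α * k + β - 1) * (t - u) ^ (ρ - 1)) (Ioc 0 t) := fun k =>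
    (intervalIntegrable_iff_integrableOn_Ioc_of_le ht.le).mp (betaKernel_integrable hρ (hq k) ht)
  have hval : ∀ k : ℕ,
      ∫ u in Ioc (0:ℝ) t, u ^ (α * k + β - 1) * (t - u) ^ (ρ - 1) = V k := fun k => by
    rw [← intervalIntegral.integral_of_le ht.le, betaKernel_integral hρ (hq k) ht]
  -- pointwise expansion of the integrand as a series
  have hpt : EqOn (fun u : ℝ => (((t - u) ^ (ρ - 1) : ℝ) : ℂ) * ((u ^ (β - 1) : ℝ) : ℂ) *
      prabhakar α β γ (lam * ((u ^ α : ℝ) : ℂ))) (fun u => ∑' k, F k u) (Ioc 0 t) := by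
    intro u hu
    have hu0 : 0 < u := hu.1
    simp only [prabhakar]
    rw [← tsum_mul_left]
    refine tsum_congr fun k => ?_
    have hΓ : Complex.Gamma ((α:ℂ) * k + β) = ((Real.Gamma (α * k + β) : ℝ) : ℂ) := by
      rw [show ((α:ℂ) * k + β) = ((α * k + β : ℝ) : ℂ) by push_cast; ring, Complex.Gamma_ofReal]
    have hpow : ((u ^ α : ℝ)) ^ (k:ℕ) = u ^ (α * k) := by
      rw [← Real.rpow_natCast (u ^ α) k, ← Real.rpow_mul hu0.le]
    have hsplit : u ^ (α * k + β - 1) = u ^ (α * k) * u ^ (β - 1) := by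
      rw [← Real.rpow_add hu0]; ring_nf
    simp only [hF, hc, hΓ, mul_pow, ← Complex.ofReal_pow, hpow, hsplit]
    push_cast
    ring
  have hmeas : ∀ k : ℕ, AEStronglyMeasurable (F k) (volume.restrict (Ioc 0 t)) := by
    intro k
    rw [← Measure.restrict_congr_set Ioo_ae_eq_Ioc]
    apply ContinuousOn.aestronglyMeasurable ?_ measurableSet_Ioo
    apply ContinuousOn.mul continuousOn_const
    apply Continuous.comp_continuousOn Complex.continuous_ofReal
    apply ContinuousOn.mul
    · refine ContinuousOn.rpow_const continuousOn_id fun x hx => Or.inl (ne_of_gt hx.1)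
    · refine ContinuousOn.rpow_const (continuous_const.sub continuous_id).continuousOn
        fun x hx => Or.inl (sub_ne_zero_of_ne (ne_of_gt hx.2))
  have hFint : ∀ k : ℕ, Integrable (F k) (volume.restrict (Ioc 0 t)) := fun k =>
    ((hint k).ofReal).const_mul (c k)
  have hlint : ∀ k : ℕ, ∫⁻ u in Ioc (0:ℝ) t, ‖F k u‖₊ = ENNReal.ofReal (‖c k‖ * V k) := by
    intro k
    simp only [← enorm_eq_nnnorm]
    rw [← ofReal_integral_norm_eq_lintegral_enorm (hFint k)]
    congr 1
    have heq : EqOn (fun u => ‖F k u‖)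
        (fun u => ‖c k‖ * (u ^ (α * k + β - 1) * (t - u) ^ (ρ - 1))) (Ioc 0 t) := by
      intro u hu
      simp only [hF, norm_mul, Complex.norm_real, Real.norm_eq_abs, Complex.ofReal_mul]
      rw [_root_.abs_of_nonneg (Real.rpow_nonneg hu.1.le _),
        _root_.abs_of_nonneg (Real.rpow_nonneg (sub_nonneg.2 hu.2) _)]
    rw [setIntegral_congr_fun measurableSet_Ioc heq, integral_const_mul, hval k]
  have hw : Summable (fun k => ‖c k‖ * V k) := by
    have base := (summable_prabhakar_aux hα (show (0:ℝ) < β + ρ by linarith) γ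
      (r := ‖lam‖ * t ^ α) (by positivity)).mul_left (t ^ (β + ρ - 1) * Real.Gamma ρ)
    refine base.congr fun k => ?_
    have hnorm : ‖c k‖ = ‖(ascPochhammer ℂ k).eval γ‖ * ‖lam‖ ^ k /
        (k.factorial * Real.Gamma (α * k + β)) := by
      simp only [hc]
      rw [norm_div, norm_mul, norm_mul, norm_pow, Complex.norm_natCast, Complex.norm_real,
        Real.norm_eq_abs, abs_of_pos (hΓq k)]
    have hr1 : (‖lam‖ * t ^ α) ^ k = ‖lam‖ ^ k * t ^ (α * k) := by
      rw [mul_pow, ← Real.rpow_natCast (t ^ α) k, ← Real.rpow_mul ht.le]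
    have hr2 : t ^ (ρ + (α * k + β) - 1) = t ^ (α * k) * t ^ (β + ρ - 1) := by
      rw [← Real.rpow_add ht]; ring_nf
    have hr3 : Real.Gamma (α * k + (β + ρ)) = Real.Gamma (ρ + (α * k + β)) := by ring_nf
    simp only [hnorm, hV, hr1, hr2, hr3]
    field_simp
  have hsum_ne : ∑' k, ∫⁻ u in Ioc (0:ℝ) t, ‖F k u‖₊ ≠ ⊤ := by
    rw [tsum_congr hlint, ← ENNReal.ofReal_tsum_of_nonneg (fun k => ?_) hw]
    · exact ENNReal.ofReal_ne_top
    · have h1 : (0:ℝ) ≤ V k := by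
        apply mul_nonneg (Real.rpow_nonneg ht.le _)
        exact le_of_lt (div_pos (mul_pos hΓρ (hΓq k)) (hΓqρ k))
      exact mul_nonneg (norm_nonneg _) h1
  rw [intervalIntegral.integral_of_le ht.le,
    setIntegral_congr_fun measurableSet_Ioc hpt, integral_tsum hmeas hsum_ne]
  have hWint : ∀ k : ℕ, ∫ u in Ioc (0:ℝ) t, F k u = c k * ((V k : ℝ) : ℂ) := by
    intro k
    simp only [hF]
    rw [integral_const_mul]
    congr 1
    rw [← hval k]
    exact integral_ofReal
  rw [tsum_congr hWint]
  simp only [prabhakar]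
  rw [← tsum_mul_left, ← tsum_mul_left]
  refine tsum_congr fun k => ?_
  have hΓ2 : Complex.Gamma ((α:ℂ) * k + ((β:ℂ) + (ρ:ℂ))) = ((Real.Gamma (ρ + (α * k + β)) : ℝ) : ℂ) := by
    rw [show ((α:ℂ) * k + ((β:ℂ) + (ρ:ℂ))) = ((ρ + (α * k + β) : ℝ) : ℂ) by push_cast; ring,
      Complex.Gamma_ofReal]
  have hpow : ((t ^ α : ℝ)) ^ (k:ℕ) = t ^ (α * k) := by
    rw [← Real.rpow_natCast (t ^ α) k, ← Real.rpow_mul ht.le]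
  have hr2 : t ^ (ρ + (α * k + β) - 1) = t ^ (α * k) * t ^ (β + ρ - 1) := by
    rw [← Real.rpow_add ht]; ring_nf
  rw [hΓ2]
  simp only [hc, hV, hr2]
  have h1 : ((Real.Gamma ρ : ℝ) : ℂ) ≠ 0 := by exact_mod_cast hΓρ.ne'
  have h2 : ((Real.Gamma (α * k + β) : ℝ) : ℂ) ≠ 0 := by exact_mod_cast (hΓq k).ne'
  have h3 : ((Real.Gamma (ρ + (α * k + β)) : ℝ) : ℂ) ≠ 0 := by exact_mod_cast (hΓqρ k).ne'
  have h4 : ((Nat.factorial k : ℕ) : ℂ) ≠ 0 := by exact_mod_cast (Nat.factorial_pos k).ne'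
  rw [mul_pow, ← Complex.ofReal_pow, hpow]
  push_cast
  field_simp
end
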